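/- arXiv:math/0208234 — 5 statements merged into one kernel-verified Lean document; each statement's English description precedes it below -/
import Mathlib

section
/- Let f ∈ A¹ with ‖f‖ = 1. If L is a continuous linear functional on A¹ with L(f) = ‖L‖ = 1, and ψ ∈ L^∞(D) with ‖ψ‖_∞ = 1 represents L via L(g) = ∫_D g ψ̄ dA, then ψ = f/|f| almost everywhere on D. -/
open MeasureTheory Metric Complex Filter
open scoped ENNReal Topology

/-- The normalized area measure `dA = (1/π) · (Lebesgue measure restricted to the unit disc)`. -/
noncomputable def dA : Measure ℂ :=
  (ENNReal.ofReal (1 / Real.pi)) • (volume.restrict (ball (0 : ℂ) 1))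

/-- Membership in the Bergman space `A¹`: holomorphic on the unit disc and area-integrable. -/
def MemA1 (f : ℂ → ℂ) : Prop :=
  DifferentiableOn ℂ f (ball (0 : ℂ) 1) ∧ Integrable f dA

/-- The Bergman norm `‖f‖ = ∫_D |f| dA`. -/
noncomputable def bergNorm (f : ℂ → ℂ) : ℝ := ∫ z, ‖f z‖ ∂dA

/-- `L` is (the restriction to `A¹` of) a linear functional. -/
def IsA1Functional (L : (ℂ → ℂ) → ℂ) : Prop :=
  (∀ f g, MemA1 f → MemA1 g → L (fun z => f z + g z) = L f + L g) ∧
  (∀ (c : ℂ) (f), MemA1 f → L (fun z => c * f z) = c * L f)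

/-- `f` is a strongly exposed point of the closed unit ball of `A¹`: `f ∈ A¹`, `‖f‖ = 1`, and
there is a linear functional `L` of norm one with `L f = 1` such that any sequence in the closed
unit ball of `A¹` on which `L` tends to `1` converges to `f` in the Bergman norm. -/
def StronglyExposed (f : ℂ → ℂ) : Prop :=
  MemA1 f ∧ bergNorm f = 1 ∧
  ∃ L : (ℂ → ℂ) → ℂ, IsA1Functional L ∧ L f = 1 ∧
    (∀ g, MemA1 g → ‖L g‖ ≤ bergNorm g) ∧
    (∀ fn : ℕ → ℂ → ℂ, (∀ n, MemA1 (fn n) ∧ bergNorm (fn n) ≤ 1) →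
      Tendsto (fun n => L (fn n)) atTop (𝓝 1) →
      Tendsto (fun n => bergNorm (fun z => fn n z - f z)) atTop (𝓝 0))

/-- Membership in `(A¹)^⊥`, the annihilator of the Bergman space inside `L^∞(D)`. -/
def InAnnA1 (ψ : ℂ → ℂ) : Prop :=
  MemLp ψ ⊤ dA ∧ ∀ f, MemA1 f → ∫ z, f z * (starRingEnd ℂ) (ψ z) ∂dA = 0

/-- Membership in `(A¹)^⊥ + C(D̄)` as a subspace of `L^∞(D)`. -/
def InAnnPlusC (φ : ℂ → ℂ) : Prop :=
  ∃ g h : ℂ → ℂ, InAnnA1 g ∧ ContinuousOn h (closedBall (0 : ℂ) 1) ∧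
    ∀ᵐ z ∂dA, φ z = g z + h z

/-- The `L^∞`-distance of `φ` to the subspace `(A¹)^⊥ + C(D̄)`. -/
noncomputable def distAnnPlusC (φ : ℂ → ℂ) : ℝ≥0∞ :=
  ⨅ (ψ : ℂ → ℂ) (_ : InAnnPlusC ψ), eLpNorm (fun z => φ z - ψ z) ⊤ dA

/-- The Bergman projection `Pψ(z) = ∫_D ψ(w)/(1 - z w̄)² dA(w)`. -/
noncomputable def bergP (ψ : ℂ → ℂ) (z : ℂ) : ℂ :=
  ∫ w, ψ w / (1 - z * (starRingEnd ℂ) w) ^ 2 ∂dA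

theorem exposing_representative_eq_sign (f ψ : ℂ → ℂ) (hf : MemA1 f) (hf1 : bergNorm f = 1)
    (hψ : MemLp ψ ⊤ dA) (hψ1 : eLpNorm ψ ⊤ dA = 1)
    (hLnorm : ∀ g, MemA1 g →
      ‖∫ z, g z * (starRingEnd ℂ) (ψ z) ∂dA‖ ≤ bergNorm g)
    (hLf : ∫ z, f z * (starRingEnd ℂ) (ψ z) ∂dA = 1) :
    ∀ᵐ z ∂dA, ψ z = f z / ((‖f z‖ : ℝ) : ℂ) := by
  classical
  have hmeasψ := hψ.aestronglyMeasurable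
  -- |ψ| ≤ 1 a.e.
  have hψbd : ∀ᵐ z ∂dA, ‖ψ z‖ ≤ 1 := by
    have h := ae_le_eLpNormEssSup (f := ψ) (μ := dA)
    rw [← eLpNorm_exponent_top, hψ1] at h
    filter_upwards [h] with z hz
    have h1 : ‖ψ z‖₊ ≤ (1 : NNReal) := by exact_mod_cast (show ((‖ψ z‖₊ : NNReal) : ℝ≥0∞) ≤ 1 from hz)
    exact_mod_cast h1
  -- measurability and integrability of f ψ̄
  have hgmeas : AEStronglyMeasurable (fun z => f z * (starRingEnd ℂ) (ψ z)) dA :=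
    hf.2.aestronglyMeasurable.mul (Complex.continuous_conj.comp_aestronglyMeasurable hmeasψ)
  have hgint : Integrable (fun z => f z * (starRingEnd ℂ) (ψ z)) dA := by
    refine hf.2.norm.mono' hgmeas ?_
    filter_upwards [hψbd] with z hz
    calc ‖f z * (starRingEnd ℂ) (ψ z)‖ = ‖f z‖ * ‖ψ z‖ := by
          rw [norm_mul, RCLike.norm_conj]
      _ ≤ ‖f z‖ * 1 := by gcongr
      _ = ‖f z‖ := mul_one _
  -- the real part integrates to 1
  have hre : ∫ z, (f z * (starRingEnd ℂ) (ψ z)).re ∂dA = 1 := by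
    have := integral_re (𝕜 := ℂ) hgint
    rw [hLf] at this
    simpa using this
  -- ∫ (|f| - Re(fψ̄)) = 0 with nonnegative integrand
  have hint2 : Integrable (fun z => ‖f z‖ - (f z * (starRingEnd ℂ) (ψ z)).re) dA := by
    have h1 : Integrable (fun z => ‖f z‖) dA := by
      simpa using hf.2.norm
    have h2 : Integrable (fun z => (f z * (starRingEnd ℂ) (ψ z)).re) dA := by
      simpa [RCLike.re_to_complex] using hgint.re
    exact h1.sub h2
  have hnonneg : 0 ≤ᵐ[dA] fun z => ‖f z‖ - (f z * (starRingEnd ℂ) (ψ z)).re := by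
    filter_upwards [hψbd] with z hz
    have h1 : (f z * (starRingEnd ℂ) (ψ z)).re ≤ ‖f z * (starRingEnd ℂ) (ψ z)‖ :=
      Complex.re_le_norm _
    have h2 : ‖f z * (starRingEnd ℂ) (ψ z)‖ ≤ ‖f z‖ := by
      rw [norm_mul]
      calc ‖f z‖ * ‖(starRingEnd ℂ) (ψ z)‖
          ≤ ‖f z‖ * 1 := by
            gcongr
            simpa using hz
        _ = ‖f z‖ := mul_one _
    simp only [Pi.zero_apply]
    linarith
  have hzero : ∫ z, (‖f z‖ - (f z * (starRingEnd ℂ) (ψ z)).re) ∂dA = 0 := by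
    have h2 : Integrable (fun z => (f z * (starRingEnd ℂ) (ψ z)).re) dA := by
      simpa [RCLike.re_to_complex] using hgint.re
    rw [integral_sub hf.2.norm h2, hre]
    have : ∫ z, ‖f z‖ ∂dA = 1 := hf1
    rw [this]; ring
  have key : ∀ᵐ z ∂dA, ‖f z‖ - (f z * (starRingEnd ℂ) (ψ z)).re = 0 := by
    have := (integral_eq_zero_iff_of_nonneg_ae hnonneg hint2).mp hzero
    filter_upwards [this] with z hz using hz
  -- a.e. z is in the ball
  have hball : ∀ᵐ z ∂dA, z ∈ ball (0 : ℂ) 1 := by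
    rw [dA]
    exact Measure.ae_smul_measure (ae_restrict_mem measurableSet_ball) _
  -- f ≠ 0 a.e.
  have han : AnalyticOnNhd ℂ f (ball (0 : ℂ) 1) := hf.1.analyticOnNhd isOpen_ball
  have hne : ¬ Set.EqOn f 0 (ball (0 : ℂ) 1) := by
    intro h
    have h0 : (fun z => (‖f z‖ : ℝ)) =ᵐ[dA] 0 := by
      filter_upwards [hball] with z hz
      simp [h hz]
    have : bergNorm f = 0 := by
      rw [bergNorm, integral_congr_ae h0]; simp
    rw [hf1] at this
    norm_num at this
  have hZc : Set.Countable {z | z ∈ ball (0 : ℂ) 1 ∧ f z = 0} := by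
    set Z := {z | z ∈ ball (0 : ℂ) 1 ∧ f z = 0} with hZdef
    have hiso : ∀ z ∈ Z, ({z} : Set ℂ) ∈ 𝓝[Z] z := by
      intro z hz
      rcases (han z hz.1).eventually_eq_zero_or_eventually_ne_zero with h | h
      · exact absurd (han.eqOn_zero_of_preconnected_of_eventuallyEq_zero
          (convex_ball (0:ℂ) 1).isPreconnected hz.1 h) hne
      · rw [eventually_nhdsWithin_iff] at h
        rw [mem_nhdsWithin_iff_eventually]
        filter_upwards [h] with w hw hwZ
        by_contra hws
        exact hw (by simpa using hws) hwZ.2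
    obtain ⟨t, hts, htc, hcov⟩ :=
      TopologicalSpace.countable_cover_nhdsWithin (f := fun x => ({x} : Set ℂ)) hiso
    refine htc.mono ?_
    intro z hz
    have := hcov hz
    simpa using this
  have hfz : ∀ᵐ z ∂dA, f z ≠ 0 := by
    rw [ae_iff]
    have hle : dA {z | ¬ f z ≠ 0} ≤
        ENNReal.ofReal (1 / Real.pi) * volume {z | z ∈ ball (0 : ℂ) 1 ∧ f z = 0} := by
      rw [dA, Measure.smul_apply, smul_eq_mul, Measure.restrict_apply' measurableSet_ball]
      gcongr
      intro z hz
      simp only [Set.mem_inter_iff, Set.mem_setOf_eq, not_not] at hz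
      exact ⟨hz.2, hz.1⟩
    have h0 : volume {z | z ∈ ball (0 : ℂ) 1 ∧ f z = 0} = 0 := hZc.measure_zero _
    rw [h0, mul_zero] at hle
    exact le_antisymm hle (zero_le)
  -- pointwise conclusion
  filter_upwards [hψbd, key, hfz] with z hb hk hz
  set w := f z * (starRingEnd ℂ) (ψ z) with hwdef
  have habs : ‖f z‖ = w.re := by linarith
  have hwle : ‖w‖ ≤ ‖f z‖ := by
    rw [hwdef, norm_mul]
    calc ‖f z‖ * ‖(starRingEnd ℂ) (ψ z)‖
        ≤ ‖f z‖ * 1 := by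
          gcongr; simpa using hb
      _ = ‖f z‖ := mul_one _
  have hrew : w.re = ‖w‖ := le_antisymm (Complex.re_le_norm w) (habs ▸ hwle)
  have him : w.im = 0 := by
    have h1 : ‖w‖ ^ 2 = w.re ^ 2 + w.im ^ 2 := by
      rw [Complex.sq_norm, Complex.normSq_apply]; ring
    nlinarith [norm_nonneg w]
  have hw : w = ((‖f z‖ : ℝ) : ℂ) := by
    apply Complex.ext
    · simp [habs]
    · simp [him]
  have hconj : (starRingEnd ℂ) (f z) * ψ z = ((‖f z‖ : ℝ) : ℂ) := by
    have h := congrArg (starRingEnd ℂ) hw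
    rw [hwdef, map_mul, Complex.conj_conj, Complex.conj_ofReal] at h
    rw [← h]
  have habsne : ((‖f z‖ : ℝ) : ℂ) ≠ 0 := by
    simp only [ne_eq, Complex.ofReal_eq_zero, norm_eq_zero]
    exact hz
  have hcne : (starRingEnd ℂ) (f z) ≠ 0 := by simpa using hz
  rw [eq_div_iff habsne]
  apply mul_left_cancel₀ hcne
  rw [← mul_assoc, hconj]
  calc ((‖f z‖ : ℝ) : ℂ) * ((‖f z‖ : ℝ) : ℂ)
      = ((‖f z‖ ^ 2 : ℝ) : ℂ) := by push_cast; ring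
    _ = (Complex.normSq (f z) : ℂ) := by rw [Complex.sq_norm]
    _ = (starRingEnd ℂ) (f z) * f z := by rw [mul_comm, Complex.mul_conj]
end

section
/- For every f ∈ A¹ of unit norm, the functional L(g) = ∫_D g · (f̄/|f|) dA is an exposing functional for f: L(f) = ‖L‖ = 1 and L(g) = 1 for g in the closed unit ball of A¹ implies g = f. Hence every unit-norm function in A¹ is an exposed point of the unit ball. -/
open MeasureTheory Metric Complex Filter
open scoped ENNReal Topology

lemma unit_aux (f : ℂ → ℂ) (z : ℂ) :
    f z * (starRingEnd ℂ) (f z / (‖f z‖ : ℂ)) = (‖f z‖ : ℂ) := by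
  by_cases h : f z = 0
  · simp [h]
  · have ha : (‖f z‖ : ℂ) ≠ 0 := by
      simpa using h
    rw [map_div₀, Complex.conj_ofReal, mul_div_assoc', Complex.mul_conj,
      Complex.normSq_eq_norm_sq]
    push_cast
    field_simp

lemma bound_aux (f g : ℂ → ℂ) (z : ℂ) :
    ‖g z * (starRingEnd ℂ) (f z / (‖f z‖ : ℂ))‖ ≤ ‖g z‖ := by
  rw [norm_mul]
  refine mul_le_of_le_one_right (norm_nonneg _) ?_
  rw [RCLike.norm_conj, norm_div, Complex.norm_real, norm_norm]
  by_cases h : f z = 0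
  · simp [h]
  · rw [div_self (norm_ne_zero_iff.mpr h)]

lemma berg_eq (g : ℂ → ℂ) : bergNorm g = ∫ z, ‖g z‖ ∂dA := by
  simp [bergNorm]

lemma int_aux (f g : ℂ → ℂ) (hf : AEMeasurable f dA) (hg : Integrable g dA) :
    Integrable (fun z => g z * (starRingEnd ℂ) (f z / (‖f z‖ : ℂ))) dA := by
  have hm : AEMeasurable (fun z => (starRingEnd ℂ) (f z / (‖f z‖ : ℂ))) dA := by
    have h1 : AEMeasurable (fun z => (‖f z‖ : ℂ)) dA :=
      Complex.measurable_ofReal.comp_aemeasurable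
        (continuous_norm.measurable.comp_aemeasurable hf)
    exact (Complex.continuous_conj.measurable.comp_aemeasurable (hf.div h1))
  refine Integrable.mono' hg.norm
    ((hg.aemeasurable.mul hm).aestronglyMeasurable) ?_
  exact Filter.Eventually.of_forall fun z => by simpa using bound_aux f g z

-- unit functional value
lemma L_self (f : ℂ → ℂ) (hf : MemA1 f) (hf1 : bergNorm f = 1) :
    ∫ z, f z * (starRingEnd ℂ) (f z / (‖f z‖ : ℂ)) ∂dA = 1 := by
  have : ∫ z, f z * (starRingEnd ℂ) (f z / (‖f z‖ : ℂ)) ∂dA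
      = ∫ z, ((‖f z‖ : ℝ) : ℂ) ∂dA := by
    exact integral_congr_ae (Filter.Eventually.of_forall fun z => unit_aux f z)
  rw [this]
  rw [bergNorm] at hf1
  have h2 : ∫ z, ((‖f z‖ : ℝ) : ℂ) ∂dA = ((∫ z, ‖f z‖ ∂dA : ℝ) : ℂ) :=
    integral_ofReal
  rw [h2, hf1, Complex.ofReal_one]

-- norm bound
lemma L_bound (f g : ℂ → ℂ) (hg : MemA1 g) :
    ‖∫ z, g z * (starRingEnd ℂ) (f z / (‖f z‖ : ℂ)) ∂dA‖
      ≤ bergNorm g := by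
  rw [berg_eq]
  refine (norm_integral_le_integral_norm _).trans ?_
  refine integral_mono_of_nonneg (Filter.Eventually.of_forall fun z => norm_nonneg _)
    hg.2.norm (Filter.Eventually.of_forall fun z => bound_aux f g z)

lemma key_ae (f g : ℂ → ℂ) (hf : MemA1 f) (hg : MemA1 g) (hgle : bergNorm g ≤ 1)
    (hL : ∫ z, g z * (starRingEnd ℂ) (f z / (‖f z‖ : ℂ)) ∂dA = 1) :
    ∀ᵐ z ∂dA, g z * (starRingEnd ℂ) (f z)
      = ((‖g z‖ * ‖f z‖ : ℝ) : ℂ) := by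
  set u := fun z => g z * (starRingEnd ℂ) (f z / (‖f z‖ : ℂ)) with hu
  have hui : Integrable u dA := int_aux f g hf.2.aemeasurable hg.2
  have hRe : ∫ z, (u z).re ∂dA = 1 := by
    have h := integral_re (μ := dA) hui
    simp only [RCLike.re_to_complex] at h
    rw [h, hL]
    simp
  have hbd : ∀ z, ‖u z‖ ≤ ‖g z‖ := fun z => by
    simpa [hu] using bound_aux f g z
  have hnonneg : ∀ z, 0 ≤ ‖g z‖ - (u z).re := fun z => by
    have h1 : (u z).re ≤ ‖u z‖ := Complex.re_le_norm _
    linarith [hbd z]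
  have hgi : Integrable (fun z => ‖g z‖) dA := by
    simpa using hg.2.norm
  have huire : Integrable (fun z => (u z).re) dA := by
    have := hui.re
    simpa [RCLike.re_to_complex] using this
  have hvi : Integrable (fun z => ‖g z‖ - (u z).re) dA := hgi.sub huire
  have hint : ∫ z, (‖g z‖ - (u z).re) ∂dA = 0 := by
    refine le_antisymm ?_ (integral_nonneg hnonneg)
    rw [integral_sub hgi huire, hRe]
    have : ∫ z, ‖g z‖ ∂dA = bergNorm g := rfl
    linarith [hgle, this ▸ le_refl (∫ z, ‖g z‖ ∂dA)]
  have hae0 := (integral_eq_zero_iff_of_nonneg hnonneg hvi).mp hint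
  refine hae0.mono fun z hz => ?_
  have hz' : ‖g z‖ = (u z).re := by
    have : ‖g z‖ - (u z).re = 0 := hz
    linarith
  by_cases hfz : f z = 0
  · have hu0 : u z = 0 := by simp [hu, hfz]
    have : ‖g z‖ = 0 := by rw [hz', hu0]; simp
    have hgz : g z = 0 := by simpa using this
    simp [hfz, hgz]
  · have ha : (‖f z‖ : ℂ) ≠ 0 := by
      simpa using hfz
    have habs : ‖u z‖ = (u z).re :=
      le_antisymm (by rw [← hz']; exact hbd z) (Complex.re_le_norm _)
    have him : (u z).im = 0 := by
      have h1 := Complex.sq_norm (u z)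
      rw [Complex.normSq_apply, habs] at h1
      nlinarith
    have hu_eq : u z = ((‖g z‖ : ℝ) : ℂ) := by
      rw [hz']
      exact Complex.ext (by simp) (by simp [him])
    have hmul : g z * (starRingEnd ℂ) (f z) = u z * (‖f z‖ : ℂ) := by
      rw [hu]
      simp only [map_div₀, Complex.conj_ofReal]
      field_simp
    rw [hmul, hu_eq, Complex.ofReal_mul]

lemma hdA_eq : dA = (ENNReal.ofReal (1 / Real.pi)) • (volume.restrict (ball (0 : ℂ) 1)) := rfl

lemma hc0 : (ENNReal.ofReal (1 / Real.pi)) ≠ 0 :=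
  (ENNReal.ofReal_pos.mpr (by positivity)).ne'

lemma ae_ball_dA : ∀ᵐ z ∂dA, z ∈ ball (0 : ℂ) 1 := by
  rw [hdA_eq]
  exact Measure.ae_smul_measure (ae_restrict_mem measurableSet_ball) _

lemma rigidity (f g : ℂ → ℂ) (hf : MemA1 f) (hf1 : bergNorm f = 1) (hg : MemA1 g)
    (hkey : ∀ᵐ z ∂dA, g z * (starRingEnd ℂ) (f z)
      = ((‖g z‖ * ‖f z‖ : ℝ) : ℂ))
    (hL : ∫ z, g z * (starRingEnd ℂ) (f z / (‖f z‖ : ℂ)) ∂dA = 1) :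
    Set.EqOn g f (ball (0 : ℂ) 1) := by
  set P : ℂ → Prop := fun z => g z * (starRingEnd ℂ) (f z)
      = ((‖g z‖ * ‖f z‖ : ℝ) : ℂ) with hP
  -- transfer to volume
  have hkey' : ∀ᵐ z ∂volume, z ∈ ball (0 : ℂ) 1 → P z := by
    rw [hdA_eq] at hkey
    exact (ae_restrict_iff' measurableSet_ball).mp (by simpa [ae_iff, hc0, not_le.mpr Real.pi_pos] using hkey)
  have hN : volume {z : ℂ | ¬ (z ∈ ball (0 : ℂ) 1 → P z)} = 0 := hkey'
  -- a point where f is nonzero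
  have hz₀ : ∃ z₀ ∈ ball (0 : ℂ) 1, f z₀ ≠ 0 := by
    by_contra h
    push_neg at h
    have : bergNorm f = 0 := by
      rw [bergNorm]
      rw [integral_eq_zero_of_ae (ae_ball_dA.mono fun z hz => by simp [h z hz])]
    rw [this] at hf1; norm_num at hf1
  obtain ⟨z₀, hz₀b, hz₀f⟩ := hz₀
  -- small ball where f ≠ 0
  have hca : ContinuousAt f z₀ :=
    hf.1.continuousOn.continuousAt (isOpen_ball.mem_nhds hz₀b)
  have hmem : (ball (0 : ℂ) 1 ∩ {z | f z ≠ 0}) ∈ 𝓝 z₀ :=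
    Filter.inter_mem (isOpen_ball.mem_nhds hz₀b) (hca.eventually_ne hz₀f)
  obtain ⟨ε, hε, hBsub⟩ := Metric.mem_nhds_iff.mp hmem
  set B := ball z₀ ε with hB
  have hB1 : B ⊆ ball (0 : ℂ) 1 := fun z hz => (hBsub hz).1
  have hBne : ∀ z ∈ B, f z ≠ 0 := fun z hz => (hBsub hz).2
  -- imaginary part vanishes on B
  have him0 : ∀ w ∈ B, (g w * (starRingEnd ℂ) (f w)).im = 0 := by
    intro w hw
    by_contra himw
    set q : ℂ → ℝ := fun z => (g z * (starRingEnd ℂ) (f z)).im with hq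
    have hqc : ContinuousOn q (ball (0 : ℂ) 1) :=
      Complex.continuous_im.comp_continuousOn
        ((hg.1.continuousOn).mul
          (Complex.continuous_conj.comp_continuousOn hf.1.continuousOn))
    have hqca : ContinuousAt q w := hqc.continuousAt (isOpen_ball.mem_nhds (hB1 hw))
    have hev : ({z | q z ≠ 0} ∩ B) ∈ 𝓝 w :=
      Filter.inter_mem (hqca.eventually_ne himw) (isOpen_ball.mem_nhds hw)
    obtain ⟨δ, hδ, hVsub⟩ := Metric.mem_nhds_iff.mp hev
    have hsub : ball w δ ⊆ {z : ℂ | ¬ (z ∈ ball (0 : ℂ) 1 → P z)} := by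
      intro x hx
      obtain ⟨hq0, hxB⟩ := hVsub hx
      intro hcon
      have hPx : P x := hcon (hB1 hxB)
      have : q x = 0 := by rw [hq]; simp only; rw [hPx]; simp
      exact hq0 this
    have h1 : (0 : ℝ≥0∞) < volume (ball w δ) := Metric.measure_ball_pos volume w hδ
    have h2 : volume (ball w δ) = 0 := le_antisymm (hN ▸ measure_mono hsub) zero_le
    rw [h2] at h1; exact lt_irrefl _ h1
  -- φ = g / f is holomorphic and real on B
  set φ : ℂ → ℂ := fun z => g z / f z with hφ
  have hφd : DifferentiableOn ℂ φ B := (hg.1.mono hB1).div (hf.1.mono hB1) hBne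
  have hφim : ∀ w ∈ B, (φ w).im = 0 := by
    intro w hw
    have h0 := him0 w hw
    rw [Complex.mul_im, Complex.conj_re, Complex.conj_im] at h0
    rw [hφ]; simp only
    rw [Complex.div_im, div_sub_div_same, div_eq_zero_iff]
    left; linarith
  -- open mapping theorem: φ is constant on B
  have hφa : AnalyticOnNhd ℂ φ B := hφd.analyticOnNhd isOpen_ball
  have hconst : ∃ c : ℂ, ∀ z ∈ B, φ z = c := by
    rcases hφa.is_constant_or_isOpen (convex_ball z₀ ε).isPreconnected with ⟨c, hc⟩ | hopen
    · exact ⟨c, hc⟩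
    · exfalso
      have himg : IsOpen (φ '' B) := hopen B subset_rfl isOpen_ball
      have hz₀B : z₀ ∈ B := mem_ball_self hε
      obtain ⟨δ, hδ, hbsub⟩ := Metric.isOpen_iff.mp himg (φ z₀) ⟨z₀, hz₀B, rfl⟩
      have hp : φ z₀ + (δ / 2 : ℝ) * Complex.I ∈ ball (φ z₀) δ := by
        rw [mem_ball, Complex.dist_eq]
        have : ‖(δ / 2 : ℝ) * Complex.I‖ = δ / 2 := by
          rw [norm_mul, Complex.norm_I, Complex.norm_real, mul_one, Real.norm_of_nonneg (by linarith)]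
        simp only [add_sub_cancel_left, this]
        linarith
      obtain ⟨x, hxB, hpx⟩ := hbsub hp
      have h1 : (φ x).im = 0 := hφim x hxB
      have h2 : (φ z₀ + (δ / 2 : ℝ) * Complex.I).im = δ / 2 := by
        simp [Complex.add_im, hφim z₀ hz₀B]
      rw [hpx, h2] at h1
      linarith
  obtain ⟨c, hc⟩ := hconst
  have hgf : ∀ z ∈ B, g z = c * f z := by
    intro z hz
    have := hc z hz
    rw [hφ] at this
    field_simp [hBne z hz] at this
    linear_combination this
  -- identity theorem
  have hha : AnalyticOnNhd ℂ (fun z => g z - c * f z) (ball (0 : ℂ) 1) :=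
    (hg.1.sub ((differentiableOn_const c).mul hf.1)).analyticOnNhd isOpen_ball
  have hev0 : (fun z => g z - c * f z) =ᶠ[𝓝 z₀] 0 := by
    filter_upwards [isOpen_ball.mem_nhds (mem_ball_self hε)] with z hz
    simp [hgf z hz]
  have hzero : Set.EqOn (fun z => g z - c * f z) 0 (ball (0 : ℂ) 1) :=
    hha.eqOn_zero_of_preconnected_of_eventuallyEq_zero
      (convex_ball (0 : ℂ) 1).isPreconnected hz₀b hev0
  have hgball : ∀ z ∈ ball (0 : ℂ) 1, g z = c * f z := by
    intro z hz
    have := hzero hz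
    simp only [Pi.zero_apply] at this
    exact sub_eq_zero.mp this
  -- compute c = 1
  have hcongr : ∫ z, g z * (starRingEnd ℂ) (f z / (‖f z‖ : ℂ)) ∂dA
      = c * ∫ z, f z * (starRingEnd ℂ) (f z / (‖f z‖ : ℂ)) ∂dA := by
    rw [← integral_const_mul]
    exact integral_congr_ae (ae_ball_dA.mono fun z hz => by simp only [hgball z hz]; ring)
  rw [hcongr, L_self f hf hf1, mul_one] at hL
  intro z hz
  rw [hgball z hz, hL, one_mul]

theorem unit_norm_exposed (f : ℂ → ℂ) (hf : MemA1 f) (hf1 : bergNorm f = 1) :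
    (∫ z, f z * (starRingEnd ℂ) (f z / (‖f z‖ : ℂ)) ∂dA = 1) ∧
    (∀ g, MemA1 g →
      ‖∫ z, g z * (starRingEnd ℂ) (f z / (‖f z‖ : ℂ)) ∂dA‖
        ≤ bergNorm g) ∧
    (∀ g, MemA1 g → bergNorm g ≤ 1 →
      (∫ z, g z * (starRingEnd ℂ) (f z / (‖f z‖ : ℂ)) ∂dA) = 1 →
      Set.EqOn g f (ball (0 : ℂ) 1)) := by
  exact ⟨L_self f hf hf1, fun g hg => L_bound f g hg,
    fun g hg hgle hLg => rigidity f g hf hf1 hg (key_ae f g hf hg hgle hLg) hLg⟩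
end

section
/- For the exposing functional L(g) = ∫_D g(z) (1−z̄)/(1−z) dA(z) on A¹ there exist complex constants C₀, C₁ such that L(g) = C₀ g(0) + C₁ g′(0) for all g ∈ A¹. Consequently φ₂ = (1−z)/|1−z| (i.e., (1−z)/(|1−z|)) minus a polynomial lies in (A¹)^⊥, so φ₂ ∈ (A¹)^⊥ + C(D̄). -/
open MeasureTheory Metric Complex Filter
open scoped ENNReal Topology

set_option maxHeartbeats 1000000

section
namespace BergAux

open Set

lemma invpi_ne_zero : ENNReal.ofReal (1 / Real.pi) ≠ 0 := by
  simp only [ne_eq, ENNReal.ofReal_eq_zero, not_le]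
  positivity

lemma integrable_dA_iff {f : ℂ → ℂ} :
    Integrable f dA ↔ IntegrableOn f (ball (0:ℂ) 1) volume := by
  rw [dA, integrable_smul_measure invpi_ne_zero ENNReal.ofReal_ne_top]
  rfl

lemma ae_ball_dA : ∀ᵐ z ∂dA, z ∈ ball (0:ℂ) 1 := by
  rw [dA]
  exact Measure.ae_smul_measure (ae_restrict_mem measurableSet_ball) _

lemma integral_dA (f : ℂ → ℂ) :
    ∫ z, f z ∂dA = (Real.pi)⁻¹ • ∫ z in ball (0:ℂ) 1, f z := by
  rw [dA, integral_smul_measure, ENNReal.toReal_ofReal (by positivity)]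
  norm_num

/-- integrability transfer under polar coordinates, real version -/
lemma integrableOn_comp_polarCoord_symm_real (f : ℝ × ℝ → ℂ) (hf : Integrable f volume) :
    IntegrableOn (fun p : ℝ × ℝ => p.1 • f (polarCoord.symm p)) polarCoord.target volume := by
  set B : ℝ × ℝ → ℝ × ℝ →L[ℝ] ℝ × ℝ := fun p =>
    LinearMap.toContinuousLinearMap (Matrix.toLin (Module.Basis.finTwoProd ℝ) (Module.Basis.finTwoProd ℝ)
      !![Real.cos p.2, -p.1 * Real.sin p.2; Real.sin p.2, p.1 * Real.cos p.2]) with hB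
  have hd : ∀ p ∈ polarCoord.target,
      HasFDerivWithinAt polarCoord.symm (B p) polarCoord.target p :=
    fun p _ => (hasFDerivAt_polarCoord_symm p).hasFDerivWithinAt
  have B_det : ∀ p, (B p).det = p.1 := by
    intro p
    conv_rhs => rw [← one_mul p.1, ← Real.cos_sq_add_sin_sq p.2]
    simp only [hB, neg_mul, LinearMap.det_toContinuousLinearMap, LinearMap.det_toLin,
      Matrix.det_fin_two_of, sub_neg_eq_add]
    ring
  have hinj : Set.InjOn polarCoord.symm polarCoord.target := polarCoord.symm.injOn
  have h1 : IntegrableOn f (polarCoord.symm '' polarCoord.target) volume := by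
    rw [OpenPartialHomeomorph.symm_image_target_eq_source]
    exact hf.integrableOn
  have h2 := (integrableOn_image_iff_integrableOn_abs_det_fderiv_smul volume
      polarCoord.open_target.measurableSet hd hinj f).mp h1
  refine h2.congr_fun (fun p hp => ?_) polarCoord.open_target.measurableSet
  beta_reduce
  rw [B_det, abs_of_pos hp.1]

lemma complex_polar_symm_eq (p : ℝ × ℝ) :
    Complex.polarCoord.symm p = Complex.measurableEquivRealProd.symm (polarCoord.symm p) := by
  rw [Complex.polarCoord_symm_apply, polarCoord_symm_apply]
  apply Complex.ext <;> simp [← Complex.ofReal_cos, ← Complex.ofReal_sin]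

lemma integrableOn_comp_polarCoord_symm (f : ℂ → ℂ) (hf : Integrable f volume) :
    IntegrableOn (fun p : ℝ × ℝ => p.1 • f (Complex.polarCoord.symm p))
      polarCoord.target volume := by
  have hf' : Integrable (fun p : ℝ × ℝ => f (Complex.measurableEquivRealProd.symm p)) volume :=
    ((Complex.volume_preserving_equiv_real_prod.symm).integrable_comp_emb
      Complex.measurableEquivRealProd.symm.measurableEmbedding).mpr hf
  have h2 := integrableOn_comp_polarCoord_symm_real
    (fun q => f (Complex.measurableEquivRealProd.symm q)) hf'
  simpa only [← complex_polar_symm_eq] using h2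

end BergAux
namespace BergAux
open Set

lemma polar_symm_circleMap (r θ : ℝ) :
    Complex.polarCoord.symm (r, θ) = circleMap 0 r θ := by
  rw [Complex.polarCoord_symm_apply]
  simp [circleMap, Complex.exp_mul_I, ← Complex.ofReal_cos, ← Complex.ofReal_sin]

/-- Inner circle integral identity. -/
lemma inner_circle (g u K : ℂ → ℂ) (r : ℝ) (hr0 : 0 < r) (hr1 : r < 1)
    (hg : DifferentiableOn ℂ g (ball (0:ℂ) 1))
    (hu : DifferentiableOn ℂ u (ball (0:ℂ) 1))
    (hcirc : ∀ w : ℂ, ‖w‖ = r → K w = u w / w) :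
    ∫ θ in Ioo (-Real.pi) Real.pi, (g (Complex.polarCoord.symm (r, θ)) *
        K (Complex.polarCoord.symm (r, θ)))
      = (2 * Real.pi : ℝ) • deriv (fun w => g w * u w) 0 := by
  have hπ := Real.pi_pos
  have hstep1 : ∫ θ in Ioo (-Real.pi) Real.pi, (g (Complex.polarCoord.symm (r, θ)) *
      K (Complex.polarCoord.symm (r, θ)))
      = ∫ θ in (0:ℝ)..(2*Real.pi), ((fun z => g z * K z) ∘ circleMap 0 r) θ := by
    rw [← integral_Ioc_eq_integral_Ioo, ← intervalIntegral.integral_of_le (by linarith)]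
    have heq : ∀ θ : ℝ, g (Complex.polarCoord.symm (r, θ)) * K (Complex.polarCoord.symm (r, θ))
        = ((fun z => g z * K z) ∘ circleMap 0 r) θ := by
      intro θ; simp only [Function.comp, polar_symm_circleMap]
    simp_rw [heq]
    have hper : Function.Periodic ((fun z => g z * K z) ∘ circleMap 0 r) (2*Real.pi) :=
      (periodic_circleMap 0 r).comp _
    have h2 := hper.intervalIntegral_add_eq (-Real.pi) 0
    rw [show -Real.pi + 2*Real.pi = Real.pi by ring,
      show (0:ℝ) + 2*Real.pi = 2*Real.pi by ring] at h2
    rw [h2]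
  rw [hstep1]
  set R : NNReal := Real.toNNReal r with hRdef
  have hco : (R : ℝ) = r := Real.coe_toNNReal r hr0.le
  have hdiff : DifferentiableOn ℂ (fun w => g w * u w) (closedBall (0:ℂ) (R:ℝ)) := by
    rw [hco]
    exact (hg.mono (closedBall_subset_ball hr1)).mul (hu.mono (closedBall_subset_ball hr1))
  have hps : HasFPowerSeriesOnBall (fun w => g w * u w)
      (cauchyPowerSeries (fun w => g w * u w) 0 R) 0 R :=
    hdiff.hasFPowerSeriesOnBall (Real.toNNReal_pos.mpr hr0)
  have hderiv : deriv (fun w => g w * u w) 0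
      = cauchyPowerSeries (fun w => g w * u w) 0 R 1 (fun _ => (1:ℂ)) :=
    hps.hasFPowerSeriesAt.deriv
  rw [cauchyPowerSeries_apply, hco] at hderiv
  have hint : (∮ z in C(0, r), ((1:ℂ) / (z - 0)) ^ 1 • (z - 0)⁻¹ • (g z * u z))
      = Complex.I * ∫ θ in (0:ℝ)..(2*Real.pi), ((fun z => g z * K z) ∘ circleMap 0 r) θ := by
    rw [circleIntegral, ← intervalIntegral.integral_const_mul]
    refine intervalIntegral.integral_congr fun θ _ => ?_
    have hz0 : circleMap 0 r θ ≠ 0 := circleMap_ne_center (ne_of_gt hr0)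
    have habs : ‖circleMap 0 r θ‖ = r := by
      rw [norm_circleMap_zero, abs_of_pos hr0]
    have hK : K (circleMap 0 r θ) = u (circleMap 0 r θ) / circleMap 0 r θ := hcirc _ habs
    simp only [Function.comp, deriv_circleMap, smul_eq_mul, sub_zero, one_div, pow_one, hK]
    field_simp
  rw [hint] at hderiv
  have hπc : (Real.pi : ℂ) ≠ 0 := by exact_mod_cast Real.pi_ne_zero
  rw [smul_eq_mul] at hderiv
  rw [(Complex.real_smul :
    (2 * Real.pi : ℝ) • deriv (fun w => g w * u w) 0 = _), hderiv]
  push_cast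
  field_simp

end BergAux
namespace BergAux
open Set

lemma core (g K : ℂ → ℂ) (hg : MemA1 g) (hKm : Measurable K) (M : ℝ)
    (hKb : ∀ z ∈ ball (0:ℂ) 1, ‖K z‖ ≤ M)
    (u : ℝ → ℂ → ℂ)
    (hu : ∀ r ∈ Set.Ioo (0:ℝ) 1, DifferentiableOn ℂ (u r) (ball (0:ℂ) 1))
    (hcirc : ∀ r ∈ Set.Ioo (0:ℝ) 1, ∀ w : ℂ, ‖w‖ = r → K w = u r w / w) :
    ∫ z, g z * K z ∂dA
      = (Real.pi)⁻¹ • ∫ r in Set.Ioo (0:ℝ) 1,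
          ((2 * Real.pi * r : ℝ)) • deriv (fun w => g w * u r w) 0 := by
  have hπ := Real.pi_pos
  set G : ℂ → ℂ := fun z => g z * K z with hGdef
  -- integrability of G on the ball
  have hgi : IntegrableOn g (ball (0:ℂ) 1) volume := integrable_dA_iff.mp hg.2
  have hGmeas : AEStronglyMeasurable G (volume.restrict (ball (0:ℂ) 1)) :=
    hgi.aestronglyMeasurable.mul hKm.aestronglyMeasurable
  have hGint : IntegrableOn G (ball (0:ℂ) 1) volume := by
    refine Integrable.mono' (hgi.norm.const_mul |M|) hGmeas ?_
    filter_upwards [ae_restrict_mem measurableSet_ball] with z hz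
    calc ‖G z‖ = ‖g z‖ * ‖K z‖ := by simp [hGdef]
    _ ≤ ‖g z‖ * M := by
        refine mul_le_mul_of_nonneg_left ?_ (norm_nonneg _)
        exact hKb z hz
    _ ≤ |M| * ‖g z‖ := by
        rw [mul_comm]
        exact mul_le_mul_of_nonneg_right (le_abs_self M) (norm_nonneg _)
  have hFint : Integrable ((ball (0:ℂ) 1).indicator G) volume :=
    (integrable_indicator_iff measurableSet_ball).mpr hGint
  -- pass to polar coordinates
  have hstep2 : ∫ z in ball (0:ℂ) 1, G z ∂volume
      = ∫ p in Set.Ioo (0:ℝ) 1 ×ˢ Set.Ioo (-Real.pi) Real.pi,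
          (fun p : ℝ × ℝ => p.1 • G (Complex.polarCoord.symm p)) p ∂volume := by
    rw [← integral_indicator measurableSet_ball,
      ← Complex.integral_comp_polarCoord_symm ((ball (0:ℂ) 1).indicator G)]
    rw [← integral_indicator polarCoord.open_target.measurableSet,
      ← integral_indicator (measurableSet_Ioo.prod measurableSet_Ioo)]
    congr 1
    funext p
    by_cases hp : p ∈ polarCoord.target
    · rw [Set.indicator_of_mem hp]
      have hp1 : 0 < p.1 := hp.1
      have habs : ‖Complex.polarCoord.symm p‖ = p.1 := by
        rw [Complex.norm_polarCoord_symm, abs_of_pos hp1]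
      by_cases h1 : p.1 < 1
      · have hmem : Complex.polarCoord.symm p ∈ ball (0:ℂ) 1 := by
          rw [mem_ball_zero_iff, habs]; exact h1
        rw [Set.indicator_of_mem hmem, Set.indicator_of_mem (Set.mem_prod.mpr ⟨Set.mem_Ioo.mpr ⟨hp1, h1⟩, hp.2⟩)]
      · have hmem : Complex.polarCoord.symm p ∉ ball (0:ℂ) 1 := by
          rw [mem_ball_zero_iff, habs]; exact h1
        rw [Set.indicator_of_notMem hmem, Set.indicator_of_notMem
          (fun hmem2 => h1 (Set.mem_prod.mp hmem2).1.2), smul_zero]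
    · rw [Set.indicator_of_notMem hp, Set.indicator_of_notMem
        (fun hmem2 => hp (Set.mem_prod.mpr ⟨Set.Ioo_subset_Ioi_self (Set.mem_prod.mp hmem2).1, (Set.mem_prod.mp hmem2).2⟩))]
  -- integrability on the product set
  have hprodInt : IntegrableOn (fun p : ℝ × ℝ => p.1 • G (Complex.polarCoord.symm p))
      (Set.Ioo (0:ℝ) 1 ×ˢ Set.Ioo (-Real.pi) Real.pi) volume := by
    have h1 := integrableOn_comp_polarCoord_symm _ hFint
    have h2 : IntegrableOn (fun p : ℝ × ℝ => p.1 • (ball (0:ℂ) 1).indicator G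
        (Complex.polarCoord.symm p))
        (Set.Ioo (0:ℝ) 1 ×ˢ Set.Ioo (-Real.pi) Real.pi) volume :=
      h1.mono_set (fun p hp => Set.mem_prod.mpr ⟨Set.Ioo_subset_Ioi_self (Set.mem_prod.mp hp).1, (Set.mem_prod.mp hp).2⟩)
    refine h2.congr_fun (fun p hp => ?_) (measurableSet_Ioo.prod measurableSet_Ioo)
    have hmem : Complex.polarCoord.symm p ∈ ball (0:ℂ) 1 := by
      rw [mem_ball_zero_iff, Complex.norm_polarCoord_symm,
        abs_of_pos hp.1.1]
      exact hp.1.2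
    beta_reduce
    rw [Set.indicator_of_mem hmem]
  -- Fubini
  have hstep3 : ∫ p in Set.Ioo (0:ℝ) 1 ×ˢ Set.Ioo (-Real.pi) Real.pi,
        (fun p : ℝ × ℝ => p.1 • G (Complex.polarCoord.symm p)) p ∂volume
      = ∫ r in Set.Ioo (0:ℝ) 1, ∫ θ in Set.Ioo (-Real.pi) Real.pi,
          r • G (Complex.polarCoord.symm (r, θ)) ∂volume ∂volume := by
    rw [Measure.volume_eq_prod] at hprodInt ⊢
    exact setIntegral_prod _ hprodInt
  -- inner integral evaluation
  have hstep4 : ∫ r in Set.Ioo (0:ℝ) 1, ∫ θ in Set.Ioo (-Real.pi) Real.pi,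
        r • G (Complex.polarCoord.symm (r, θ)) ∂volume ∂volume
      = ∫ r in Set.Ioo (0:ℝ) 1, ((2 * Real.pi * r : ℝ)) •
          deriv (fun w => g w * u r w) 0 ∂volume := by
    refine setIntegral_congr_fun measurableSet_Ioo (fun r hr => ?_)
    rw [integral_smul]
    rw [inner_circle g (u r) K r hr.1 hr.2 hg.1 (hu r hr) (hcirc r hr)]
    rw [smul_smul]
    congr 1
    ring
  rw [integral_dA, hstep2, hstep3, hstep4]

end BergAux
namespace BergAux
open Set

lemma deriv_at_zero (g : ℂ → ℂ) (hg : MemA1 g) : HasDerivAt g (deriv g 0) 0 :=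
  (hg.1.differentiableAt (isOpen_ball.mem_nhds (by simp))).hasDerivAt

lemma set_integral_Ioo_smul (a : ℝ → ℝ) (c : ℂ) :
    ∫ r in Set.Ioo (0:ℝ) 1, a r • c = (∫ r in (0:ℝ)..1, a r) • c := by
  rw [integral_smul_const]
  congr 1
  rw [intervalIntegral.integral_of_le zero_le_one, integral_Ioc_eq_integral_Ioo]

lemma ne_zero_of_abs_pos {w : ℂ} {r : ℝ} (hw : ‖w‖ = r) (hr : 0 < r) : w ≠ 0 := by
  intro h0
  rw [h0, norm_zero] at hw
  exact absurd hw.symm (ne_of_gt hr)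

lemma conj_eq_div {w : ℂ} {r : ℝ} (hw : ‖w‖ = r) (hr : 0 < r) :
    (starRingEnd ℂ) w = ((r:ℂ))^2 / w := by
  have hw0 : w ≠ 0 := ne_zero_of_abs_pos hw hr
  rw [eq_div_iff hw0, mul_comm, Complex.mul_conj, Complex.normSq_eq_norm_sq, hw]
  push_cast
  ring

/-- mean value property -/
lemma mean_value (g : ℂ → ℂ) (hg : MemA1 g) : ∫ z, g z ∂dA = g 0 := by
  have hπ := Real.pi_pos
  have h := core g (fun _ => 1) hg measurable_const 1
    (fun z _ => by simp) (fun _ w => w) (fun r hr => differentiableOn_id)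
    (fun r hr w hw => ((div_self (ne_zero_of_abs_pos hw hr.1)).symm))
  beta_reduce at h
  simp only [mul_one] at h
  have hder : deriv (fun w => g w * w) 0 = g 0 := by
    have := ((deriv_at_zero g hg).fun_mul (hasDerivAt_id 0)).deriv
    simpa using this
  rw [hder] at h
  rw [h, set_integral_Ioo_smul]
  have hint : ∫ r in (0:ℝ)..1, 2*Real.pi*r = Real.pi := by
    rw [intervalIntegral.integral_const_mul, integral_id]
    ring
  rw [hint, smul_smul, inv_mul_cancel₀ (ne_of_gt hπ), one_smul]

/-- first conjugate moment -/
lemma conj_moment (g : ℂ → ℂ) (hg : MemA1 g) :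
    ∫ z, g z * (starRingEnd ℂ) z ∂dA = (1/2 : ℂ) * deriv g 0 := by
  have hπ := Real.pi_pos
  have h := core g (fun z => (starRingEnd ℂ) z) hg Complex.continuous_conj.measurable 1
    (fun z hz => by
      rw [Complex.norm_conj]
      rw [mem_ball_zero_iff] at hz
      exact le_of_lt hz)
    (fun r _ => ((r:ℂ))^2) (fun r hr => (differentiable_const _).differentiableOn)
    (fun r hr w hw => conj_eq_div hw hr.1)
  beta_reduce at h
  rw [h]
  have hcong : ∫ r in Set.Ioo (0:ℝ) 1, ((2*Real.pi*r : ℝ)) • deriv (fun w => g w * ((r:ℂ))^2) 0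
      = ∫ r in Set.Ioo (0:ℝ) 1, ((2*Real.pi*r^3 : ℝ)) • deriv g 0 := by
    refine setIntegral_congr_fun measurableSet_Ioo (fun r hr => ?_)
    have hd : deriv (fun w => g w * ((r:ℂ))^2) 0 = deriv g 0 * ((r:ℂ))^2 :=
      ((deriv_at_zero g hg).mul_const _).deriv
    rw [hd, Complex.real_smul, Complex.real_smul]
    push_cast
    ring
  rw [hcong, set_integral_Ioo_smul]
  have hint : ∫ r in (0:ℝ)..1, 2*Real.pi*r^3 = Real.pi/2 := by
    rw [intervalIntegral.integral_const_mul, integral_pow]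
    norm_num
    ring
  rw [hint, smul_smul]
  have : (Real.pi)⁻¹ * (Real.pi/2) = 1/2 := by
    field_simp
  rw [this, Complex.real_smul]
  push_cast
  ring

/-- the exposing functional -/
lemma expose (g : ℂ → ℂ) (hg : MemA1 g) :
    ∫ z, g z * ((1 - (starRingEnd ℂ) z) / (1 - z)) ∂dA
      = (1/2 : ℂ) * g 0 - (1/2 : ℂ) * deriv g 0 := by
  have hπ := Real.pi_pos
  have habs : ∀ z : ℂ, ‖(1 - (starRingEnd ℂ) z) / (1 - z)‖ ≤ 1 := by
    intro z
    rw [norm_div]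
    have h1 : (1:ℂ) - (starRingEnd ℂ) z = (starRingEnd ℂ) (1 - z) := by
      rw [map_sub, map_one]
    rw [h1, Complex.norm_conj]
    by_cases h : ‖1 - z‖ = 0
    · rw [h]; norm_num
    · rw [div_self h]
  have hmeas : Measurable (fun z : ℂ => (1 - (starRingEnd ℂ) z) / (1 - z)) :=
    (measurable_const.sub Complex.continuous_conj.measurable).div
      (measurable_const.sub measurable_id)
  have h := core g (fun z => (1 - (starRingEnd ℂ) z) / (1 - z)) hg hmeas 1
    (fun z _ => habs z)
    (fun r w => (w - ((r:ℂ))^2) / (1 - w))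
    (fun r hr => by
      refine DifferentiableOn.div
        ((differentiable_id.sub_const _).differentiableOn)
        ((differentiable_const _).sub differentiable_id).differentiableOn
        (fun w hw => ?_)
      rw [mem_ball_zero_iff] at hw
      intro hzero
      rw [sub_eq_zero] at hzero
      rw [← hzero] at hw
      simp at hw)
    (fun r hr w hw => by
      have hw0 : w ≠ 0 := ne_zero_of_abs_pos hw hr.1
      have hw1 : (1:ℂ) - w ≠ 0 := by
        intro hzero
        rw [sub_eq_zero] at hzero
        rw [← hzero] at hw
        simp at hw
        exact absurd hw.symm (ne_of_lt hr.2)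
      rw [conj_eq_div hw hr.1]
      have hnum : (1 : ℂ) - ((r:ℂ))^2/w = (w - ((r:ℂ))^2)/w := by
        field_simp
      rw [hnum, div_div, div_div, mul_comm])
  beta_reduce at h
  rw [h]
  have hcong : ∫ r in Set.Ioo (0:ℝ) 1,
        ((2*Real.pi*r : ℝ)) • deriv (fun w => g w * ((w - ((r:ℂ))^2) / (1 - w))) 0
      = ∫ r in Set.Ioo (0:ℝ) 1,
          (((2*Real.pi*(r - r^3) : ℝ)) • g 0 - ((2*Real.pi*r^3 : ℝ)) • deriv g 0) := by
    refine setIntegral_congr_fun measurableSet_Ioo (fun r hr => ?_)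
    have h1 : HasDerivAt (fun w : ℂ => w - ((r:ℂ))^2) 1 0 := (hasDerivAt_id 0).sub_const _
    have h2 : HasDerivAt (fun w : ℂ => (1:ℂ) - w) (-1) 0 := (hasDerivAt_id 0).const_sub 1
    have hdiv : HasDerivAt (fun w : ℂ => (w - ((r:ℂ))^2) / (1 - w))
        ((1 * (1 - 0) - (0 - ((r:ℂ))^2) * (-1)) / (1 - 0)^2) 0 := h1.div h2 (by norm_num)
    have hd := ((deriv_at_zero g hg).fun_mul hdiv).deriv
    rw [hd, Complex.real_smul, Complex.real_smul, Complex.real_smul]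
    push_cast
    ring
  rw [hcong]
  have hi1 : Integrable (fun r : ℝ => ((2*Real.pi*(r - r^3) : ℝ)) • g 0)
      (volume.restrict (Set.Ioo (0:ℝ) 1)) := by
    refine Integrable.smul_const ?_ _
    exact ((continuous_const.mul ((continuous_id).sub (continuous_pow 3))).integrableOn_Icc).mono_set
      Set.Ioo_subset_Icc_self
  have hi2 : Integrable (fun r : ℝ => ((2*Real.pi*r^3 : ℝ)) • deriv g 0)
      (volume.restrict (Set.Ioo (0:ℝ) 1)) := by
    refine Integrable.smul_const ?_ _
    exact ((continuous_const.mul (continuous_pow 3)).integrableOn_Icc).mono_set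
      Set.Ioo_subset_Icc_self
  rw [integral_sub hi1 hi2, set_integral_Ioo_smul, set_integral_Ioo_smul]
  have hint1 : ∫ r in (0:ℝ)..1, 2*Real.pi*(r - r^3) = Real.pi/2 := by
    rw [intervalIntegral.integral_const_mul,
      intervalIntegral.integral_sub intervalIntegral.intervalIntegrable_id
        (intervalIntegral.intervalIntegrable_pow 3),
      integral_id, integral_pow]
    norm_num
    ring
  have hint2 : ∫ r in (0:ℝ)..1, 2*Real.pi*r^3 = Real.pi/2 := by
    rw [intervalIntegral.integral_const_mul, integral_pow]
    norm_num
    ring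
  rw [hint1, hint2, smul_sub, smul_smul, smul_smul]
  have hhalf : (Real.pi)⁻¹ * (Real.pi/2) = 1/2 := by field_simp
  rw [hhalf, Complex.real_smul, Complex.real_smul]
  push_cast
  ring

end BergAux
namespace BergAux
open Set

lemma kernel_bound1 : ∀ z : ℂ, ‖(1 - (starRingEnd ℂ) z) / (1 - z)‖ ≤ 1 := by
  intro z
  rw [norm_div]
  have h1 : (1:ℂ) - (starRingEnd ℂ) z = (starRingEnd ℂ) (1 - z) := by
    rw [map_sub, map_one]
  rw [h1, Complex.norm_conj]
  by_cases h : ‖1 - z‖ = 0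
  · rw [h]; norm_num
  · rw [div_self h]

lemma kernel_bound2 : ∀ z : ℂ, ‖(1 - z) / (1 - (starRingEnd ℂ) z)‖ ≤ 1 := by
  intro z
  rw [norm_div]
  have h1 : (1:ℂ) - (starRingEnd ℂ) z = (starRingEnd ℂ) (1 - z) := by
    rw [map_sub, map_one]
  rw [h1, Complex.norm_conj]
  by_cases h : ‖1 - z‖ = 0
  · rw [h]; norm_num
  · rw [div_self h]

lemma psi_mem : MemLp (fun z => (1 - z) / (1 - (starRingEnd ℂ) z) - ((1/2 : ℂ) - z)) ⊤ dA := by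
  refine memLp_top_of_bound ?_ (5/2 : ℝ) ?_
  · exact (((measurable_const.sub measurable_id).div
      (measurable_const.sub Complex.continuous_conj.measurable)).sub
      (measurable_const.sub measurable_id)).aestronglyMeasurable
  · filter_upwards [ae_ball_dA] with z hz
    rw [mem_ball_zero_iff] at hz
    have h12 : ‖(1/2 : ℂ)‖ = 1/2 := by norm_num
    calc ‖(1 - z) / (1 - (starRingEnd ℂ) z) - ((1/2 : ℂ) - z)‖
        ≤ ‖(1 - z) / (1 - (starRingEnd ℂ) z)‖ + ‖(1/2 : ℂ) - z‖ := norm_sub_le _ _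
      _ ≤ 1 + (‖(1/2 : ℂ)‖ + ‖z‖) := by
          refine add_le_add ?_ (norm_sub_le _ _)
          exact kernel_bound2 z
      _ ≤ 5/2 := by rw [h12]; linarith

lemma psi_annihilates (f : ℂ → ℂ) (hf : MemA1 f) :
    ∫ z, f z * (starRingEnd ℂ)
      ((1 - z) / (1 - (starRingEnd ℂ) z) - ((1/2 : ℂ) - z)) ∂dA = 0 := by
  have hmeasK : Measurable (fun z : ℂ => (1 - (starRingEnd ℂ) z) / (1 - z)) :=
    (measurable_const.sub Complex.continuous_conj.measurable).div
      (measurable_const.sub measurable_id)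
  have intA : Integrable (fun z => f z * ((1 - (starRingEnd ℂ) z)/(1 - z))) dA := by
    refine Integrable.mono' hf.2.norm
      (hf.2.aestronglyMeasurable.mul hmeasK.aestronglyMeasurable) ?_
    filter_upwards with z
    rw [norm_mul]
    calc ‖f z‖ * ‖(1 - (starRingEnd ℂ) z)/(1 - z)‖ ≤ ‖f z‖ * 1 := by
          refine mul_le_mul_of_nonneg_left ?_ (norm_nonneg _)
          exact kernel_bound1 z
      _ = ‖f z‖ := mul_one _
  have intC : Integrable (fun z => f z * (starRingEnd ℂ) z) dA := by
    refine Integrable.mono' hf.2.norm (hf.2.aestronglyMeasurable.mul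
      Complex.continuous_conj.measurable.aestronglyMeasurable) ?_
    filter_upwards [ae_ball_dA] with z hz
    rw [mem_ball_zero_iff] at hz
    rw [norm_mul]
    calc ‖f z‖ * ‖(starRingEnd ℂ) z‖ ≤ ‖f z‖ * 1 := by
          refine mul_le_mul_of_nonneg_left ?_ (norm_nonneg _)
          rw [Complex.norm_conj]
          exact le_of_lt hz
      _ = ‖f z‖ := mul_one _
  have intB : Integrable (fun z => (1/2:ℂ) * f z) dA := hf.2.const_mul _
  have hre : (fun z => f z * (starRingEnd ℂ)
        ((1 - z) / (1 - (starRingEnd ℂ) z) - ((1/2 : ℂ) - z)))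
      = fun z => f z * ((1 - (starRingEnd ℂ) z)/(1 - z))
          - ((1/2:ℂ) * f z - f z * (starRingEnd ℂ) z) := by
    funext z
    have hc : (starRingEnd ℂ) ((1 - z) / (1 - (starRingEnd ℂ) z) - ((1/2 : ℂ) - z))
        = (1 - (starRingEnd ℂ) z)/(1 - z) - ((1/2:ℂ) - (starRingEnd ℂ) z) := by
      simp [map_sub, map_div₀, map_ofNat]
    rw [hc]; ring
  have intBC : Integrable (fun z => (1/2:ℂ) * f z - f z * (starRingEnd ℂ) z) dA :=
    intB.sub intC
  rw [hre, integral_sub intA intBC, integral_sub intB intC,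
    expose f hf, integral_const_mul, mean_value f hf, conj_moment f hf]
  ring

lemma psi_ann : InAnnA1 (fun z => (1 - z) / (1 - (starRingEnd ℂ) z) - ((1/2 : ℂ) - z)) :=
  ⟨psi_mem, psi_annihilates⟩

end BergAux

end

theorem phi2_functional_and_annPlusC :
    (∃ C₀ C₁ : ℂ, ∀ g, MemA1 g →
      ∫ z, g z * ((1 - (starRingEnd ℂ) z) / (1 - z)) ∂dA = C₀ * g 0 + C₁ * deriv g 0) ∧
    (∃ p : Polynomial ℂ,
      InAnnA1 (fun z => (1 - z) / (1 - (starRingEnd ℂ) z) - p.eval z)) ∧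
    InAnnPlusC (fun z => (1 - z) / (1 - (starRingEnd ℂ) z)) := by
  refine ⟨⟨1/2, -(1/2), fun g hg => ?_⟩, ⟨Polynomial.C (1/2 : ℂ) - Polynomial.X, ?_⟩, ?_⟩
  · rw [BergAux.expose g hg]; ring
  · simpa only [Polynomial.eval_sub, Polynomial.eval_C, Polynomial.eval_X] using BergAux.psi_ann
  · exact ⟨fun z => (1 - z) / (1 - (starRingEnd ℂ) z) - ((1/2 : ℂ) - z),
      fun z => (1/2 : ℂ) - z, BergAux.psi_ann,
      (continuous_const.sub continuous_id).continuousOn,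
      Filter.Eventually.of_forall (fun z => by ring)⟩
end

section
/- Let φ_β = (1−z)^{β/2}/(1−z̄)^{β/2} on D (so φ_β = f_β/|f_β| for f_β = c_β(1−z)^β). For every even nonnegative integer 2n, φ_{2n} lies in (A¹)^⊥ + C(D̄). -/
open MeasureTheory Metric Complex Filter
open scoped ENNReal Topology

open Set
open scoped Real

lemma inner_vanish (W : ℂ → ℂ) (hW : DifferentiableOn ℂ W (ball (0:ℂ) 1))
    {ρ : ℝ} (hρ0 : 0 < ρ) (hρ1 : ρ < 1) :
    ∫ θ in Ioo (-π) π, Complex.exp (θ * Complex.I) * W ((ρ:ℂ) * Complex.exp (θ * Complex.I)) = 0 := by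
  set E : ℝ → ℂ := fun θ => Complex.exp (θ * Complex.I) * W ((ρ:ℂ) * Complex.exp (θ * Complex.I)) with hE
  have hper : Function.Periodic E (2*π) := by
    intro θ
    have h1 : Complex.exp (((θ + 2*π : ℝ) : ℂ) * Complex.I) = Complex.exp ((θ:ℂ) * Complex.I) := by
      push_cast
      rw [add_mul, Complex.exp_add, Complex.exp_two_pi_mul_I, mul_one]
    simp only [hE, Complex.ofReal_add]
    push_cast
    rw [add_mul, Complex.exp_add, Complex.exp_two_pi_mul_I, mul_one]
  have hcirc : (∮ z in C((0:ℂ), ρ), W z) = 0 := by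
    apply circleIntegral_eq_zero_of_differentiable_on_off_countable (le_of_lt hρ0)
      Set.countable_empty
    · exact hW.continuousOn.mono (closedBall_subset_ball hρ1)
    · intro z hz
      exact hW.differentiableAt (isOpen_ball.mem_nhds (ball_subset_ball hρ1.le hz.1))
  have hexp : (∮ z in C((0:ℂ), ρ), W z) = ((ρ:ℂ) * Complex.I) * ∫ θ in (0:ℝ)..2*π, E θ := by
    rw [← intervalIntegral.integral_const_mul]
    simp only [circleIntegral]
    apply intervalIntegral.integral_congr
    intro θ _
    simp only [deriv_circleMap]
    simp only [circleMap, zero_add, smul_eq_mul, hE]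
    ring
  have hJ : ∫ θ in (0:ℝ)..2*π, E θ = 0 := by
    have hne : ((ρ:ℂ) * Complex.I) ≠ 0 :=
      mul_ne_zero (Complex.ofReal_ne_zero.2 (ne_of_gt hρ0)) Complex.I_ne_zero
    rw [hexp] at hcirc
    exact (mul_eq_zero.1 hcirc).resolve_left hne
  calc ∫ θ in Ioo (-π) π, E θ = ∫ θ in Ioc (-π) π, E θ := (integral_Ioc_eq_integral_Ioo).symm
    _ = ∫ θ in (-π)..π, E θ := (intervalIntegral.integral_of_le (by linarith [Real.pi_pos])).symm
    _ = ∫ θ in (-π)..(-π + 2*π), E θ := by ring_nf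
    _ = ∫ θ in (0:ℝ)..(0 + 2*π), E θ := hper.intervalIntegral_add_eq (-π) 0
    _ = 0 := by rw [zero_add]; exact hJ

lemma core_vanish (W : ℂ → ℂ) (hW : DifferentiableOn ℂ W (ball (0:ℂ) 1))
    (k : ℕ) {r : ℝ} (hr0 : 0 < r) (hr1 : r < 1) :
    ∫ z in ball (0:ℂ) r, (starRingEnd ℂ) z ^ k * z ^ (k+1) * W z = 0 := by
  set F : ℂ → ℂ := fun z => (starRingEnd ℂ) z ^ k * z ^ (k+1) * W z with hF
  have hFc : ContinuousOn F (ball (0:ℂ) 1) := by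
    apply ContinuousOn.mul
    · exact ContinuousOn.mul ((continuous_star.pow k).continuousOn)
        ((continuous_pow (k+1)).continuousOn)
    · exact hW.continuousOn
  have hsymm_cont : Continuous fun p : ℝ × ℝ => Complex.polarCoord.symm p := by
    simp only [Complex.polarCoord_symm_apply]
    continuity
  have hmeas_t : MeasurableSet (Complex.polarCoord.symm ⁻¹' ball (0:ℂ) r) :=
    hsymm_cont.measurable measurableSet_ball
  have step1 : ∫ z in ball (0:ℂ) r, F z
      = ∫ p in polarCoord.target, p.1 • (Set.indicator (ball (0:ℂ) r) F) (Complex.polarCoord.symm p) := by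
    rw [← integral_indicator measurableSet_ball,
      ← Complex.integral_comp_polarCoord_symm (Set.indicator (ball (0:ℂ) r) F)]
  have hind : ∀ p : ℝ × ℝ, p.1 • (Set.indicator (ball (0:ℂ) r) F) (Complex.polarCoord.symm p)
      = Set.indicator (Complex.polarCoord.symm ⁻¹' ball (0:ℂ) r)
          (fun p : ℝ × ℝ => p.1 • F (Complex.polarCoord.symm p)) p := by
    intro p
    by_cases hp : Complex.polarCoord.symm p ∈ ball (0:ℂ) r
    · rw [Set.indicator_of_mem hp, Set.indicator_of_mem (Set.mem_preimage.2 hp)]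
    · rw [Set.indicator_of_notMem hp, Set.indicator_of_notMem (fun h => hp (Set.mem_preimage.1 h)),
        smul_zero]
  have hset : polarCoord.target ∩ (Complex.polarCoord.symm ⁻¹' ball (0:ℂ) r)
      = Set.Ioo (0:ℝ) r ×ˢ Set.Ioo (-π) π := by
    ext p
    simp only [polarCoord_target, Set.mem_inter_iff, Set.mem_preimage, mem_ball,
      Complex.dist_eq, sub_zero, Set.mem_prod, Set.mem_Ioi, Set.mem_Ioo,
      Complex.norm_polarCoord_symm]
    constructor
    · rintro ⟨⟨h1, h2⟩, h3⟩
      exact ⟨⟨h1, by rwa [abs_of_pos h1] at h3⟩, h2⟩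
    · rintro ⟨⟨h1, h2⟩, h3⟩
      exact ⟨⟨h1, h3⟩, by rwa [abs_of_pos h1]⟩
  have step2 : ∫ p in polarCoord.target, p.1 • (Set.indicator (ball (0:ℂ) r) F) (Complex.polarCoord.symm p)
      = ∫ p in Set.Ioo (0:ℝ) r ×ˢ Set.Ioo (-π) π, p.1 • F (Complex.polarCoord.symm p) := by
    simp_rw [hind]
    rw [setIntegral_indicator hmeas_t, hset]
  -- integrability on the product set
  have hmaps : ∀ p : ℝ × ℝ, p ∈ Set.Icc (0:ℝ) r ×ˢ Set.Icc (-π) π →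
      Complex.polarCoord.symm p ∈ ball (0:ℂ) 1 := by
    rintro p ⟨⟨h1, h2⟩, _⟩
    rw [mem_ball, Complex.dist_eq, sub_zero, Complex.norm_polarCoord_symm, _root_.abs_of_nonneg h1]
    exact lt_of_le_of_lt h2 hr1
  have hint : IntegrableOn (fun p : ℝ × ℝ => p.1 • F (Complex.polarCoord.symm p))
      (Set.Ioo (0:ℝ) r ×ˢ Set.Ioo (-π) π) := by
    apply IntegrableOn.mono_set (t := Set.Icc (0:ℝ) r ×ˢ Set.Icc (-π) π)
    · apply ContinuousOn.integrableOn_compact (isCompact_Icc.prod isCompact_Icc)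
      refine ContinuousOn.smul (f := fun p : ℝ × ℝ => p.1) (g := fun p => F (Complex.polarCoord.symm p)) ?_ ?_
      · exact continuous_fst.continuousOn
      · exact hFc.comp hsymm_cont.continuousOn hmaps
    · exact Set.prod_mono Set.Ioo_subset_Icc_self Set.Ioo_subset_Icc_self
  have step3 : ∫ p in Set.Ioo (0:ℝ) r ×ˢ Set.Ioo (-π) π, p.1 • F (Complex.polarCoord.symm p)
      = ∫ x in Set.Ioo (0:ℝ) r, ∫ y in Set.Ioo (-π) π, (x:ℝ) • F (Complex.polarCoord.symm (x, y)) := by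
    rw [MeasureTheory.Measure.volume_eq_prod] at hint ⊢
    exact MeasureTheory.setIntegral_prod _ hint
  have hinner : ∀ x ∈ Set.Ioo (0:ℝ) r,
      (∫ y in Set.Ioo (-π) π, (x:ℝ) • F (Complex.polarCoord.symm (x, y))) = 0 := by
    rintro ρ ⟨hρ0, hρr⟩
    have hsymm_eq : ∀ θ : ℝ, Complex.polarCoord.symm (ρ, θ) = (ρ:ℂ) * Complex.exp (θ * Complex.I) := by
      intro θ
      rw [Complex.polarCoord_symm_apply, Complex.exp_mul_I, ← Complex.ofReal_cos, ← Complex.ofReal_sin]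
    have key : ∀ θ : ℝ, (ρ:ℝ) • F (Complex.polarCoord.symm (ρ, θ))
        = (ρ:ℂ)^(2*k+2) * (Complex.exp (θ * Complex.I) * W ((ρ:ℂ) * Complex.exp (θ * Complex.I))) := by
      intro θ
      rw [hsymm_eq θ]
      have h1 : (starRingEnd ℂ) ((ρ:ℂ) * Complex.exp (θ * Complex.I))
          = (ρ:ℂ) * Complex.exp (-((θ:ℂ) * Complex.I)) := by
        rw [map_mul, Complex.conj_ofReal, ← Complex.exp_conj]
        congr 1
        rw [map_mul, Complex.conj_ofReal, Complex.conj_I]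
        ring
      simp only [hF, h1, Complex.real_smul]
      rw [mul_pow, mul_pow, ← Complex.exp_nat_mul, ← Complex.exp_nat_mul]
      have hmul : Complex.exp ((k:ℂ) * -((θ:ℂ) * Complex.I)) * Complex.exp (((k+1 : ℕ):ℂ) * ((θ:ℂ) * Complex.I)) = Complex.exp ((θ:ℂ) * Complex.I) := by
        rw [← Complex.exp_add]
        congr 1
        push_cast
        ring
      calc (ρ:ℂ) * ((ρ:ℂ)^k * Complex.exp ((k:ℂ) * -((θ:ℂ)*Complex.I)) * ((ρ:ℂ)^(k+1) * Complex.exp (((k+1:ℕ):ℂ)*((θ:ℂ)*Complex.I))) * W ((ρ:ℂ) * Complex.exp ((θ:ℂ)*Complex.I)))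
          = (ρ:ℂ)^(2*k+2) * ((Complex.exp ((k:ℂ) * -((θ:ℂ)*Complex.I)) * Complex.exp (((k+1:ℕ):ℂ)*((θ:ℂ)*Complex.I))) * W ((ρ:ℂ) * Complex.exp ((θ:ℂ)*Complex.I))) := by ring
        _ = (ρ:ℂ)^(2*k+2) * (Complex.exp ((θ:ℂ)*Complex.I) * W ((ρ:ℂ) * Complex.exp ((θ:ℂ)*Complex.I))) := by rw [hmul]
    simp_rw [key]
    rw [MeasureTheory.integral_const_mul]
    rw [inner_vanish W hW hρ0 (lt_trans hρr hr1)]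
    rw [mul_zero]
  rw [step1, step2, step3]
  rw [setIntegral_congr_fun measurableSet_Ioo hinner]
  exact integral_zero _ _

lemma exists_Q (n : ℕ) : ∃ Q : Polynomial ℝ,
    (1 : Polynomial ℝ) - (1 - Polynomial.X)^n * (PowerSeries.trunc (n+1) ((PowerSeries.invOneSubPow ℝ n).val))
      = Polynomial.X^(n+1) * Q := by
  have hdvd : (Polynomial.X : Polynomial ℝ)^(n+1) ∣
      (1 : Polynomial ℝ) - (1 - Polynomial.X)^n * (PowerSeries.trunc (n+1) ((PowerSeries.invOneSubPow ℝ n).val)) := by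
    rw [Polynomial.X_pow_dvd_iff]
    intro d hd
    have hcoe : ∀ i : ℕ, ((1 - Polynomial.X : Polynomial ℝ)^n).coeff i
        = PowerSeries.coeff i ((1 - PowerSeries.X : PowerSeries ℝ)^n) := by
      intro i
      rw [← Polynomial.coeff_coe]
      congr 1
      push_cast
      rfl
    have hunit : ((1 - PowerSeries.X : PowerSeries ℝ)^n) * (PowerSeries.invOneSubPow ℝ n).val = 1 := by
      rw [← PowerSeries.invOneSubPow_inv_eq_one_sub_pow]
      exact (PowerSeries.invOneSubPow ℝ n).inv_val
    have h1 : (PowerSeries.coeff d) (((1 - PowerSeries.X : PowerSeries ℝ)^n) * (PowerSeries.invOneSubPow ℝ n).val)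
        = if d = 0 then 1 else 0 := by
      rw [hunit, PowerSeries.coeff_one]
    rw [PowerSeries.coeff_mul] at h1
    rw [Polynomial.coeff_sub, Polynomial.coeff_mul, Polynomial.coeff_one]
    rw [← h1]
    have : ∀ p ∈ Finset.HasAntidiagonal.antidiagonal d,
        ((1 - Polynomial.X : Polynomial ℝ)^n).coeff p.1 *
          (PowerSeries.trunc (n+1) ((PowerSeries.invOneSubPow ℝ n).val)).coeff p.2
        = (PowerSeries.coeff p.1) ((1 - PowerSeries.X : PowerSeries ℝ)^n) *
            (PowerSeries.coeff p.2) ((PowerSeries.invOneSubPow ℝ n).val) := by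
      intro p hp
      have hp2 : p.2 < n + 1 := by
        have := Finset.HasAntidiagonal.mem_antidiagonal.mp hp
        omega
      rw [hcoe, PowerSeries.coeff_trunc, if_pos hp2]
    rw [Finset.sum_congr rfl this]
    simp
  obtain ⟨Q, hQ⟩ := hdvd
  exact ⟨Q, hQ⟩

theorem phi_even_mem_annPlusC (n : ℕ) :
    InAnnPlusC (fun z => ((1 - z) / (1 - (starRingEnd ℂ) z)) ^ n) := by
  obtain ⟨QR, hQR⟩ := exists_Q n
  set q : Polynomial ℝ := PowerSeries.trunc (n+1) ((PowerSeries.invOneSubPow ℝ n).val) with hq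
  set φ : ℂ → ℂ := fun z => ((1 - z) / (1 - (starRingEnd ℂ) z)) ^ n with hφ
  set qc : ℂ → ℂ := fun w => Polynomial.aeval w q with hqc
  set Qc : ℂ → ℂ := fun w => Polynomial.aeval w QR with hQc
  set h : ℂ → ℂ := fun z => (1 - z)^n * qc ((starRingEnd ℂ) z) with hh
  set g : ℂ → ℂ := fun z => φ z - h z with hg
  -- basic continuity / measurability
  have hqcont : Continuous qc := q.continuous_aeval
  have hcont_h : Continuous h := by
    apply Continuous.mul
    · exact ((continuous_const.sub continuous_id).pow n)
    · exact hqcont.comp continuous_star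
  have hφm : Measurable φ := by
    apply Measurable.pow_const
    exact (measurable_const.sub measurable_id).div (measurable_const.sub continuous_star.measurable)
  have hgm : Measurable g := hφm.sub hcont_h.measurable
  -- key algebraic identity
  have hkey : ∀ z : ℂ, 1 - (1-z)^n * qc z = z^(n+1) * Qc z := by
    intro z
    have := congrArg (fun p : Polynomial ℝ => Polynomial.aeval z p) hQR
    simpa [map_sub, map_one, map_mul, map_pow, Polynomial.aeval_X] using this
  have hconj_qc : ∀ w : ℂ, (starRingEnd ℂ) (qc ((starRingEnd ℂ) w)) = qc w := by
    intro w
    rw [hqc]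
    simp only
    rw [Polynomial.aeval_conj q w]
    exact Complex.conj_conj _
  -- bound for φ
  have hφ_le : ∀ z : ℂ, ‖φ z‖ ≤ 1 := by
    intro z
    rw [hφ]
    simp only [norm_pow, norm_div]
    have habs : ‖1 - (starRingEnd ℂ) z‖ = ‖1 - z‖ := by
      rw [show (1 : ℂ) - (starRingEnd ℂ) z = (starRingEnd ℂ) (1 - z) by rw [map_sub, map_one]]
      exact Complex.norm_conj _
    rw [habs]
    apply pow_le_one₀ (by positivity)
    rcases eq_or_ne (‖1 - z‖) 0 with h0 | h0
    · rw [h0]; norm_num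
    · rw [div_self h0]
  -- bound for h on the closed ball
  obtain ⟨M, hM⟩ := (isCompact_closedBall (0:ℂ) 1).exists_bound_of_continuousOn hcont_h.continuousOn
  have hae_ball : ∀ᵐ z ∂dA, z ∈ ball (0:ℂ) 1 := by
    unfold dA
    exact Measure.ae_smul_measure (ae_restrict_mem measurableSet_ball) _
  have hg_bound : ∀ z ∈ ball (0:ℂ) 1, ‖g z‖ ≤ 1 + M := by
    intro z hz
    rw [hg]
    simp only
    calc ‖φ z - h z‖ ≤ ‖φ z‖ + ‖h z‖ := norm_sub_le _ _
      _ ≤ 1 + M := add_le_add (by exact hφ_le z)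
          (hM z (ball_subset_closedBall hz))
  refine ⟨g, h, ⟨?_, ?_⟩, hcont_h.continuousOn, ?_⟩
  · -- Memℒp g ⊤ dA
    apply memLp_top_of_bound hgm.aestronglyMeasurable (1 + M)
    filter_upwards [hae_ball] with z hz using hg_bound z hz
  · -- annihilator property
    intro f hf
    obtain ⟨hfd, hfi⟩ := hf
    have hpi_pos : (0:ℝ) < 1 / Real.pi := by positivity
    have hSuff : ∫ z in ball (0:ℂ) 1, f z * (starRingEnd ℂ) (g z) ∂volume = 0 := by
      -- pointwise identity
      set Wm : ℕ → ℂ → ℂ := fun m z =>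
        ((-1:ℂ)^(m+n) * (n.choose m : ℂ)) * (z^m * Qc z * f z / (1-z)^n) with hWm
      have hne : ∀ z ∈ ball (0:ℂ) 1, (1:ℂ) - z ≠ 0 := by
        intro z hz h0
        have : z = 1 := by linear_combination -h0
        rw [this] at hz
        simp at hz
      have hnec : ∀ z ∈ ball (0:ℂ) 1, (1:ℂ) - (starRingEnd ℂ) z ≠ 0 := by
        intro z hz h0
        have : (starRingEnd ℂ) z = 1 := by linear_combination -h0
        have h2 : z = 1 := by
          have := congrArg (starRingEnd ℂ) this
          simpa using this
        rw [h2] at hz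
        simp at hz
      have hpt : ∀ z ∈ ball (0:ℂ) 1, f z * (starRingEnd ℂ) (g z)
          = ∑ m ∈ Finset.range (n+1), (starRingEnd ℂ) z ^ (n-m) * z^((n-m)+1) * Wm m z := by
        intro z hz
        have h1z := hne z hz
        have h2z := hnec z hz
        have hcg : (starRingEnd ℂ) (g z)
            = (1 - (starRingEnd ℂ) z)^n * ((z^(n+1) * Qc z) / (1-z)^n) := by
          rw [hg]
          simp only [map_sub]
          have hφc : (starRingEnd ℂ) (φ z) = ((1 - (starRingEnd ℂ) z) / (1 - z))^n := by
            rw [hφ]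
            simp only [map_pow, map_div₀, map_sub, map_one, Complex.conj_conj]
          have hhc : (starRingEnd ℂ) (h z) = (1 - (starRingEnd ℂ) z)^n * qc z := by
            rw [hh]
            simp only [map_mul, map_pow, map_sub, map_one]
            rw [hconj_qc z]
          rw [hφc, hhc, div_pow, ← hkey z]
          field_simp
        rw [hcg]
        have hbin : (1 - (starRingEnd ℂ) z)^n
            = ∑ m ∈ Finset.range (n+1), (-1:ℂ)^(m+n) * 1^m * ((starRingEnd ℂ) z)^(n-m) * (n.choose m : ℂ) :=
          sub_pow 1 ((starRingEnd ℂ) z) n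
        rw [hbin, Finset.sum_mul, Finset.mul_sum]
        apply Finset.sum_congr rfl
        intro m hm
        have hmn : m ≤ n := by
          have := Finset.mem_range.mp hm
          omega
        have hzpow : z^(n+1) = z^((n-m)+1) * z^m := by
          rw [← pow_add]
          congr 1
          omega
        rw [hWm]
        simp only
        rw [hzpow]
        ring
      -- integrability of the product on the unit ball
      have hfim : IntegrableOn f (ball (0:ℂ) 1) volume := by
        have h2 := hfi
        unfold dA at h2
        rwa [integrable_smul_measure (ne_of_gt (ENNReal.ofReal_pos.2 hpi_pos))
          ENNReal.ofReal_ne_top] at h2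
      have hFi : IntegrableOn (fun z => f z * (starRingEnd ℂ) (g z)) (ball (0:ℂ) 1) volume := by
        have hbm : Integrable (fun z => (starRingEnd ℂ) (g z) * f z)
            (volume.restrict (ball (0:ℂ) 1)) := by
          apply Integrable.bdd_mul (c := 1 + M) hfim
          · exact ((continuous_star.measurable.comp hgm).aestronglyMeasurable)
          · filter_upwards [ae_restrict_mem measurableSet_ball] with z hz
            rw [show ‖(starRingEnd ℂ) (g z)‖ = ‖g z‖ from RCLike.norm_conj _]
            exact hg_bound z hz
        exact hbm.congr (ae_of_all _ fun z => mul_comm _ _)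
      -- exhaustion
      set s : ℕ → Set ℂ := fun j => ball (0:ℂ) (1 - 1/((j:ℝ)+2)) with hs
      have hrj0 : ∀ j : ℕ, (0:ℝ) < 1 - 1/((j:ℝ)+2) := by
        intro j
        have h1 : 1/((j:ℝ)+2) ≤ 1/2 := by
          apply div_le_div_of_nonneg_left one_pos.le two_pos
          · push_cast; linarith [Nat.cast_nonneg (α := ℝ) j]
        linarith
      have hrj1 : ∀ j : ℕ, (1 - 1/((j:ℝ)+2)) < 1 := by
        intro j
        have : (0:ℝ) < 1/((j:ℝ)+2) := by positivity
        linarith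
      have hmono : Monotone s := by
        intro a b hab
        apply ball_subset_ball
        have : 1/((b:ℝ)+2) ≤ 1/((a:ℝ)+2) := by
          apply one_div_le_one_div_of_le (by positivity)
          have : (a:ℝ) ≤ (b:ℝ) := Nat.cast_le.2 hab
          linarith
        linarith
      have hunion : (⋃ j, s j) = ball (0:ℂ) 1 := by
        ext z
        simp only [hs, mem_iUnion, mem_ball]
        constructor
        · rintro ⟨j, hj⟩
          exact lt_of_lt_of_le hj (le_of_lt (hrj1 j))
        · intro hz
          obtain ⟨j, hj⟩ := exists_nat_one_div_lt (show (0:ℝ) < 1 - dist z 0 by linarith)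
          refine ⟨j, ?_⟩
          have h2 : 1/((j:ℝ)+2) ≤ 1/((j:ℝ)+1) := by
            apply one_div_le_one_div_of_le (by positivity)
            linarith
          linarith [hj]
      have htends : Tendsto (fun j => ∫ z in s j, f z * (starRingEnd ℂ) (g z) ∂volume)
          atTop (𝓝 (∫ z in ball (0:ℂ) 1, f z * (starRingEnd ℂ) (g z) ∂volume)) := by
        have := tendsto_setIntegral_of_monotone (μ := volume)
          (f := fun z => f z * (starRingEnd ℂ) (g z))
          (fun j : ℕ => measurableSet_ball) hmono (by rw [hunion]; exact hFi)
        rwa [hunion] at this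
      have hWmd : ∀ m, DifferentiableOn ℂ (Wm m) (ball (0:ℂ) 1) := by
        intro m
        apply DifferentiableOn.const_mul
        apply DifferentiableOn.div
        · apply DifferentiableOn.mul
          · exact ((differentiable_pow m).differentiableOn.mul
              (QR.differentiable_aeval).differentiableOn)
          · exact hfd
        · exact ((differentiable_const (1:ℂ)).sub differentiable_id).differentiableOn.pow n
        · intro z hz
          exact pow_ne_zero n (hne z hz)
      have hzero : ∀ j : ℕ, ∫ z in s j, f z * (starRingEnd ℂ) (g z) ∂volume = 0 := by
        intro j
        have hsub : s j ⊆ ball (0:ℂ) 1 := ball_subset_ball (le_of_lt (hrj1 j))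
        rw [setIntegral_congr_fun measurableSet_ball (fun z hz => hpt z (hsub hz))]
        rw [integral_finset_sum]
        · apply Finset.sum_eq_zero
          intro m hm
          exact core_vanish (Wm m) (hWmd m) (n-m) (hrj0 j) (hrj1 j)
        · intro m hm
          apply IntegrableOn.mono_set (t := closedBall (0:ℂ) (1 - 1/((j:ℝ)+2)))
          · apply ContinuousOn.integrableOn_compact (isCompact_closedBall _ _)
            have hsub2 : closedBall (0:ℂ) (1 - 1/((j:ℝ)+2)) ⊆ ball (0:ℂ) 1 :=
              closedBall_subset_ball (hrj1 j)
            apply ContinuousOn.mul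
            · apply ContinuousOn.mul
              · exact (continuous_star.pow (n-m)).continuousOn
              · exact (continuous_pow ((n-m)+1)).continuousOn
            · exact ((hWmd m).continuousOn).mono hsub2
          · exact ball_subset_closedBall
      have : Tendsto (fun _ : ℕ => (0:ℂ)) atTop
          (𝓝 (∫ z in ball (0:ℂ) 1, f z * (starRingEnd ℂ) (g z) ∂volume)) := by
        rw [show (fun _ : ℕ => (0:ℂ)) = fun j => ∫ z in s j, f z * (starRingEnd ℂ) (g z) ∂volume
          from funext fun j => (hzero j).symm]
        exact htends
      exact tendsto_nhds_unique this tendsto_const_nhds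
    unfold dA
    rw [integral_smul_measure, hSuff, smul_zero]
  · -- a.e. equality
    apply ae_of_all
    intro z
    rw [hg]
    simp only
    ring
end

section
/- Let g_n(z) = (1/n)(1−z)^{−2+1/n}. Then ‖g_n‖_{A¹} → 1 as n → ∞; indeed ∫_D |1−z|^{−2+1/n} dA(z) = Γ(1/n)/Γ(1 + 1/(2n))². -/
open MeasureTheory Metric Complex Filter
open scoped ENNReal Topology

section AuxLemmas
open Set
open scoped Real

theorem my_lintegral_polar (f : ℝ × ℝ → ℝ≥0∞) :
    (∫⁻ p in polarCoord.target, ENNReal.ofReal p.1 * f (polarCoord.symm p)) = ∫⁻ p, f p := by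
  set B : ℝ × ℝ → ℝ × ℝ →L[ℝ] ℝ × ℝ := fun p =>
    LinearMap.toContinuousLinearMap (Matrix.toLin (Module.Basis.finTwoProd ℝ) (Module.Basis.finTwoProd ℝ)
      !![Real.cos p.2, -p.1 * Real.sin p.2; Real.sin p.2, p.1 * Real.cos p.2])
  have A : ∀ p ∈ polarCoord.target, HasFDerivWithinAt polarCoord.symm (B p) polarCoord.target p :=
    fun p _ => (hasFDerivAt_polarCoord_symm p).hasFDerivWithinAt
  have B_det : ∀ p, (B p).det = p.1 := by
    intro p
    conv_rhs => rw [← one_mul p.1, ← Real.cos_sq_add_sin_sq p.2]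
    simp only [B, neg_mul, LinearMap.det_toContinuousLinearMap, LinearMap.det_toLin,
      Matrix.det_fin_two_of, sub_neg_eq_add]
    ring
  symm
  calc
    ∫⁻ p, f p = ∫⁻ p in polarCoord.source, f p := by
      rw [← setLIntegral_univ]
      exact (setLIntegral_congr polarCoord_source_ae_eq_univ.symm)
    _ = ∫⁻ p in polarCoord.target, ENNReal.ofReal |(B p).det| * f (polarCoord.symm p) := by
      have himg : polarCoord.symm '' polarCoord.target = polarCoord.source :=
        polarCoord.symm.image_source_eq_target
      rw [← himg]
      exact lintegral_image_eq_lintegral_abs_det_fderiv_mul volume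
        polarCoord.open_target.measurableSet A polarCoord.symm.injOn f
    _ = ∫⁻ p in polarCoord.target, ENNReal.ofReal p.1 * f (polarCoord.symm p) := by
      refine setLIntegral_congr_fun polarCoord.open_target.measurableSet
        (fun p hp => ?_)
      rw [B_det, abs_of_pos hp.1]

theorem my_lintegral_polar_complex (f : ℂ → ℝ≥0∞) :
    (∫⁻ p in polarCoord.target, ENNReal.ofReal p.1 * f (Complex.polarCoord.symm p))
      = ∫⁻ z, f z := by
  rw [← (Complex.volume_preserving_equiv_real_prod.symm).lintegral_comp_emb
    Complex.measurableEquivRealProd.symm.measurableEmbedding, ← my_lintegral_polar]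
  rfl

theorem my_beta (a : ℝ) (ha : 0 < a) :
    ∫ u in Ioo (0:ℝ) 1, u ^ (a-1) * (1-u) ^ (a-1)
      = Real.Gamma a ^ 2 / Real.Gamma (2*a) := by
  have h2a : (0:ℝ) < 2*a := by linarith
  have hG : Real.Gamma (2*a) ≠ 0 := (Real.Gamma_pos_of_pos h2a).ne'
  have key : Real.Gamma a * Real.Gamma a
      = Real.Gamma (2*a) * ∫ u in Ioo (0:ℝ) 1, u ^ (a-1) * (1-u) ^ (a-1) := by
    have hc : Complex.Gamma a * Complex.Gamma a
        = Complex.Gamma (a + a) * Complex.betaIntegral a a :=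
      Complex.Gamma_mul_Gamma_eq_betaIntegral (by simpa using ha) (by simpa using ha)
    have hbeta : Complex.betaIntegral (a:ℂ) (a:ℂ)
        = ((∫ u in Ioo (0:ℝ) 1, u ^ (a-1) * (1-u) ^ (a-1) : ℝ) : ℂ) := by
      rw [Complex.betaIntegral]
      have : ∀ x ∈ Set.uIcc (0:ℝ) 1,
          (x:ℂ) ^ ((a:ℂ) - 1) * (1 - (x:ℂ)) ^ ((a:ℂ) - 1)
            = ((x ^ (a-1) * (1-x) ^ (a-1) : ℝ) : ℂ) := by
        intro x hx
        rw [Set.uIcc_of_le zero_le_one] at hx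
        have hx0 : (0:ℝ) ≤ x := hx.1
        have hx1 : (0:ℝ) ≤ 1 - x := by linarith [hx.2]
        rw [Complex.ofReal_mul, Complex.ofReal_cpow hx0, Complex.ofReal_cpow hx1]
        push_cast
        ring
      rw [intervalIntegral.integral_congr this, intervalIntegral.integral_ofReal,
        intervalIntegral.integral_of_le zero_le_one, integral_Ioc_eq_integral_Ioo]
    rw [hbeta] at hc
    have : ((a:ℂ) + a) = ((2*a : ℝ) : ℂ) := by push_cast; ring
    rw [this, Complex.Gamma_ofReal, Complex.Gamma_ofReal, ← Complex.ofReal_mul,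
      ← Complex.ofReal_mul] at hc
    exact_mod_cast hc
  rw [eq_div_iff hG, sq, key]
  ring

theorem my_cos_rpow (ε : ℝ) (hε : 0 < ε) :
    ∫ θ in Ioo (-(π/2)) (π/2), Real.cos θ ^ ε
      = 2^ε * (Real.Gamma ((ε+1)/2) ^ 2 / Real.Gamma (ε+1)) := by
  have himg_sin : Real.sin '' Ioo (-(π/2)) (π/2) = Ioo (-1:ℝ) 1 := by
    ext t
    constructor
    · rintro ⟨θ, hθ, rfl⟩
      have h1 : Real.sin θ < Real.sin (π/2) :=
        Real.strictMonoOn_sin (Ioo_subset_Icc_self hθ) (right_mem_Icc.2 (by linarith [Real.pi_pos]))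
          hθ.2
      have h2 : Real.sin (-(π/2)) < Real.sin θ :=
        Real.strictMonoOn_sin (left_mem_Icc.2 (by linarith [Real.pi_pos]))
          (Ioo_subset_Icc_self hθ) hθ.1
      rw [Real.sin_pi_div_two] at h1
      rw [Real.sin_neg, Real.sin_pi_div_two] at h2
      exact ⟨h2, h1⟩
    · intro ht
      exact ⟨Real.arcsin t,
        ⟨Real.neg_pi_div_two_lt_arcsin.2 ht.1, Real.arcsin_lt_pi_div_two.2 ht.2⟩,
        Real.sin_arcsin ht.1.le ht.2.le⟩
  have himg_aff : (fun u : ℝ => 2*u - 1) '' Ioo (0:ℝ) 1 = Ioo (-1:ℝ) 1 := by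
    ext t
    simp only [mem_image, mem_Ioo]
    constructor
    · rintro ⟨u, hu, rfl⟩; constructor <;> linarith [hu.1, hu.2]
    · intro ht; exact ⟨(t+1)/2, ⟨by linarith [ht.1], by linarith [ht.2]⟩, by ring⟩
  have K1 : ∫ t in Ioo (-1:ℝ) 1, (1-t^2) ^ ((ε-1)/2)
      = ∫ θ in Ioo (-(π/2)) (π/2), Real.cos θ ^ ε := by
    rw [← himg_sin,
      integral_image_eq_integral_abs_deriv_smul measurableSet_Ioo
        (fun θ _ => (Real.hasDerivAt_sin θ).hasDerivWithinAt)
        (Real.strictMonoOn_sin.injOn.mono Ioo_subset_Icc_self)]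
    refine setIntegral_congr_fun measurableSet_Ioo (fun θ hθ => ?_)
    have hcos : 0 < Real.cos θ := Real.cos_pos_of_mem_Ioo hθ
    have h1 : 1 - Real.sin θ ^ 2 = Real.cos θ ^ 2 := by
      rw [← Real.sin_sq_add_cos_sq θ]; ring
    rw [smul_eq_mul, h1, abs_of_pos hcos, ← Real.rpow_natCast (Real.cos θ) 2,
      ← Real.rpow_mul hcos.le]
    rw [← Real.rpow_one_add' hcos.le (by intro h; exact hε.ne' (by linarith)),
      show (1:ℝ) + (2:ℕ) * ((ε-1)/2) = ε by push_cast; ring]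
  have K2 : ∫ t in Ioo (-1:ℝ) 1, (1-t^2) ^ ((ε-1)/2)
      = 2^ε * (Real.Gamma ((ε+1)/2) ^ 2 / Real.Gamma (ε+1)) := by
    have hd : ∀ u : ℝ, HasDerivAt (fun u : ℝ => 2*u - 1) 2 u := by
      intro u
      simpa using ((hasDerivAt_id u).const_mul 2).sub_const 1
    rw [← himg_aff,
      integral_image_eq_integral_abs_deriv_smul (f' := fun _ => (2:ℝ)) measurableSet_Ioo
        (fun u _ => (hd u).hasDerivWithinAt)
        (fun u _ v _ h => by linarith [h])]
    have hcong : ∀ u ∈ Ioo (0:ℝ) 1,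
        |(2:ℝ)| • (1 - (2*u-1)^2) ^ ((ε-1)/2)
          = 2^ε * (u ^ ((ε+1)/2 - 1) * (1-u) ^ ((ε+1)/2 - 1)) := by
      intro u hu
      have hu0 : (0:ℝ) < u := hu.1
      have hu1 : (0:ℝ) < 1 - u := by linarith [hu.2]
      have h4 : 1 - (2*u-1)^2 = 4 * (u * (1-u)) := by ring
      rw [smul_eq_mul, h4, Real.mul_rpow (by norm_num) (by positivity),
        Real.mul_rpow hu0.le hu1.le]
      have h2 : (4:ℝ) ^ ((ε-1)/2) = 2 ^ (ε-1) := by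
        rw [show (4:ℝ) = 2^(2:ℝ) by norm_num [Real.rpow_natCast], ← Real.rpow_mul (by norm_num)]
        ring_nf
      have h3 : |(2:ℝ)| * (2:ℝ) ^ (ε-1) = 2 ^ ε := by
        rw [abs_of_pos two_pos, ← Real.rpow_one_add' (by norm_num : (0:ℝ) ≤ 2)
          (by intro h; exact hε.ne' (by linarith))]
        norm_num
      have hexp : (ε+1)/2 - 1 = (ε-1)/2 := by ring
      rw [hexp, h2, ← mul_assoc, h3]
    rw [setIntegral_congr_fun measurableSet_Ioo hcong, integral_const_mul,
      my_beta ((ε+1)/2) (by linarith), show 2*((ε+1)/2) = ε + 1 by ring]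
  rw [← K1, K2]

theorem my_rpow_lint (ε c : ℝ) (hε : 0 < ε) (hc : 0 < c) :
    ∫⁻ r in Ioo (0:ℝ) c, ENNReal.ofReal (r ^ (ε-1)) = ENNReal.ofReal (c^ε/ε) := by
  have hint : IntegrableOn (fun r : ℝ => r ^ (ε-1)) (Ioo 0 c) := by
    have := intervalIntegral.intervalIntegrable_rpow' (a := 0) (b := c)
      (show (-1:ℝ) < ε - 1 by linarith)
    rw [intervalIntegrable_iff_integrableOn_Ioo_of_le hc.le] at this
    exact this
  rw [← ofReal_integral_eq_lintegral_ofReal hint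
    ((ae_restrict_iff' measurableSet_Ioo).2 (ae_of_all _ fun r hr =>
      Real.rpow_nonneg hr.1.le _))]
  congr 1
  rw [← integral_Ioc_eq_integral_Ioo, ← intervalIntegral.integral_of_le hc.le,
    integral_rpow (Or.inl (by linarith))]
  rw [Real.zero_rpow (by intro h; exact hε.ne' (by linarith)), show ε - 1 + 1 = ε by ring]
  ring

theorem main_lint (ε : ℝ) (hε : 0 < ε) :
    ∫⁻ z in ball (0:ℂ) 1, ENNReal.ofReal (‖1-z‖ ^ (ε-2))
      = ENNReal.ofReal (π * (Real.Gamma ε / Real.Gamma (1+ε/2)^2)) := by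
  set G : ℂ → ℝ≥0∞ := fun w => ENNReal.ofReal (‖w‖ ^ (ε-2)) with hGdef
  have hGm : Measurable G :=
    ((continuous_norm.measurable).pow_const (ε-2)).ennreal_ofReal
  -- Step A : translation z ↦ 1 - z
  have hA : ∫⁻ z in ball (0:ℂ) 1, G (1-z) = ∫⁻ z in ball (1:ℂ) 1, G z := by
    have mp : MeasurePreserving (fun z : ℂ => 1 - z) volume volume :=
      Measure.measurePreserving_sub_left volume 1
    have hball : ∀ z : ℂ, ((1:ℂ) - z ∈ ball (1:ℂ) 1) ↔ z ∈ ball (0:ℂ) 1 := by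
      intro z
      simp [mem_ball, dist_eq_norm]
    calc ∫⁻ z in ball (0:ℂ) 1, G (1-z)
        = ∫⁻ z, (ball (1:ℂ) 1).indicator G (1 - z) := by
          rw [← lintegral_indicator measurableSet_ball]
          congr 1
          ext z
          by_cases h : z ∈ ball (0:ℂ) 1
          · rw [indicator_of_mem h, indicator_of_mem ((hball z).2 h)]
          · rw [indicator_of_notMem h, indicator_of_notMem (fun hh => h ((hball z).1 hh))]
      _ = ∫⁻ z, (ball (1:ℂ) 1).indicator G z :=
          mp.lintegral_comp (hGm.indicator measurableSet_ball)
      _ = ∫⁻ z in ball (1:ℂ) 1, G z := lintegral_indicator measurableSet_ball _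
  rw [hGdef] at hA
  rw [show (fun z => ENNReal.ofReal (‖1-z‖ ^ (ε-2)))
      = (fun z => G (1 - z)) from rfl] at *
  rw [hA]
  -- Step B : polar coordinates
  have hB : ∫⁻ z in ball (1:ℂ) 1, G z
      = ∫⁻ p in polarCoord.target,
          ENNReal.ofReal p.1 * (ball (1:ℂ) 1).indicator G (Complex.polarCoord.symm p) := by
    rw [my_lintegral_polar_complex, lintegral_indicator measurableSet_ball]
  rw [hB]
  -- Step C : product structure / Tonelli
  have hsymm_cont : Continuous (fun p : ℝ × ℝ => Complex.polarCoord.symm p) := by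
    have : (fun p : ℝ × ℝ => Complex.polarCoord.symm p)
        = fun p : ℝ × ℝ => (p.1 : ℂ) * (Real.cos p.2 + Real.sin p.2 * Complex.I) :=
      funext fun p => Complex.polarCoord_symm_apply p
    rw [this]
    continuity
  set F : ℝ × ℝ → ℝ≥0∞ :=
    fun p => ENNReal.ofReal p.1 * (ball (1:ℂ) 1).indicator G (Complex.polarCoord.symm p) with hF
  have hFm : Measurable F :=
    (measurable_fst.ennreal_ofReal).mul
      ((hGm.indicator measurableSet_ball).comp hsymm_cont.measurable)
  have htarget : polarCoord.target = Set.Ioi (0:ℝ) ×ˢ Set.Ioo (-π) π := rfl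
  rw [htarget, Measure.volume_eq_prod, ← Measure.prod_restrict,
    lintegral_prod_symm F hFm.aemeasurable]
  -- Step D : inner radial integral
  have hinner : ∀ θ ∈ Ioo (-π) π,
      (∫⁻ r in Ioi (0:ℝ), F (r, θ))
        = (Ioo (-(π/2)) (π/2)).indicator
            (fun θ => ENNReal.ofReal ((2*Real.cos θ)^ε / ε)) θ := by
    intro θ hθ
    have hmem : ∀ r : ℝ, 0 < r →
        (Complex.polarCoord.symm (r, θ) ∈ ball (1:ℂ) 1 ↔ r < 2 * Real.cos θ) := by
      intro r hr
      rw [mem_ball, Complex.dist_eq, Complex.polarCoord_symm_apply]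
      have hrepr : (r:ℂ) * (Real.cos θ + Real.sin θ * Complex.I) - 1
          = ((r * Real.cos θ - 1 : ℝ) : ℂ) + ((r * Real.sin θ : ℝ) : ℂ) * Complex.I := by
        push_cast; ring
      have pyth := Real.sin_sq_add_cos_sq θ
      have key : (r*Real.cos θ - 1)^2 + (r*Real.sin θ)^2
          = r*r - 2*r*Real.cos θ + 1 := by linear_combination (r*r) * pyth
      rw [hrepr, Complex.norm_def, Real.sqrt_lt' one_pos, one_pow,
        Complex.normSq_add_mul_I, key]
      constructor
      · intro h; nlinarith [hr]
      · intro h; nlinarith [hr]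
    have hco : ∀ r ∈ Ioi (0:ℝ),
        F (r, θ) = (Ioo (0:ℝ) (2*Real.cos θ)).indicator
          (fun r => ENNReal.ofReal (r ^ (ε-1))) r := by
      intro r hr
      have hr' : (0:ℝ) < r := hr
      by_cases hlt : r < 2 * Real.cos θ
      · rw [hF]
        simp only
        rw [indicator_of_mem ((hmem r hr').2 hlt),
          indicator_of_mem (show r ∈ Ioo (0:ℝ) (2*Real.cos θ) from ⟨hr', hlt⟩)]
        rw [hGdef]
        simp only
        rw [Complex.norm_polarCoord_symm, abs_of_pos hr',
          ← ENNReal.ofReal_mul hr'.le]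
        congr 1
        rw [show ε - 1 = 1 + (ε-2) by ring, Real.rpow_add hr', Real.rpow_one]
      · rw [hF]
        simp only
        rw [indicator_of_notMem (fun hh => hlt ((hmem r hr').1 hh)),
          indicator_of_notMem (fun hh : r ∈ Ioo (0:ℝ) (2*Real.cos θ) => hlt hh.2)]
        rw [mul_zero]
    rw [setLIntegral_congr_fun measurableSet_Ioi hco,
      lintegral_indicator measurableSet_Ioo, Measure.restrict_restrict measurableSet_Ioo,
      show Ioo (0:ℝ) (2*Real.cos θ) ∩ Ioi 0 = Ioo (0:ℝ) (2*Real.cos θ) from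
        inter_eq_left.2 (fun r hr => hr.1)]
    by_cases hθ2 : θ ∈ Ioo (-(π/2)) (π/2)
    · have hcos : 0 < Real.cos θ := Real.cos_pos_of_mem_Ioo hθ2
      rw [indicator_of_mem hθ2, my_rpow_lint ε (2*Real.cos θ) hε (by linarith)]
    · have hcos : Real.cos θ ≤ 0 := by
        have hθ2' := hθ2
        rw [mem_Ioo, not_and_or] at hθ2'
        rcases hθ2' with h | h
        · push_neg at h
          rw [← Real.cos_neg]
          exact Real.cos_nonpos_of_pi_div_two_le_of_le (by linarith)
            (by linarith [hθ.1, Real.pi_pos])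
        · push_neg at h
          exact Real.cos_nonpos_of_pi_div_two_le_of_le h (by linarith [hθ.2, Real.pi_pos])
      rw [indicator_of_notMem hθ2,
        Ioo_eq_empty (by intro h; linarith : ¬ (0:ℝ) < 2*Real.cos θ), Measure.restrict_empty,
        lintegral_zero_measure]
  rw [setLIntegral_congr_fun measurableSet_Ioo hinner]
  -- Step E : drop the indicator
  rw [lintegral_indicator measurableSet_Ioo, Measure.restrict_restrict measurableSet_Ioo,
    show Ioo (-(π/2)) (π/2) ∩ Ioo (-π) π = Ioo (-(π/2)) (π/2) from
      inter_eq_left.2 (Ioo_subset_Ioo (by linarith [Real.pi_pos]) (by linarith [Real.pi_pos]))]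
  -- Step F : back to a Bochner integral
  have hcont : Continuous (fun θ : ℝ => (2*Real.cos θ)^ε / ε) := by
    apply Continuous.div_const
    apply continuous_iff_continuousAt.2
    intro θ
    exact (Real.continuousAt_rpow_const _ _ (Or.inr hε.le)).comp
      ((continuous_const.mul Real.continuous_cos).continuousAt)
  have hint : IntegrableOn (fun θ : ℝ => (2*Real.cos θ)^ε / ε) (Ioo (-(π/2)) (π/2)) :=
    (hcont.continuousOn.integrableOn_compact isCompact_Icc).mono_set Ioo_subset_Icc_self
  have hnn : 0 ≤ᵐ[volume.restrict (Ioo (-(π/2)) (π/2))]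
      (fun θ : ℝ => (2*Real.cos θ)^ε / ε) := by
    refine (ae_restrict_iff' measurableSet_Ioo).2 (ae_of_all _ fun θ hθ => ?_)
    have hcos : 0 < Real.cos θ := Real.cos_pos_of_mem_Ioo hθ
    positivity
  rw [← ofReal_integral_eq_lintegral_ofReal hint hnn]
  -- Step G : compute the real integral
  congr 1
  have hsplit : ∀ θ ∈ Ioo (-(π/2)) (π/2),
      (2*Real.cos θ)^ε / ε = (2:ℝ)^ε * Real.cos θ ^ ε / ε := by
    intro θ hθ
    rw [Real.mul_rpow (by norm_num) (Real.cos_nonneg_of_mem_Icc (Ioo_subset_Icc_self hθ))]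
  rw [setIntegral_congr_fun measurableSet_Ioo hsplit,
    show (fun θ => (2:ℝ)^ε * Real.cos θ ^ ε / ε) = (fun θ => (2:ℝ)^ε/ε * Real.cos θ ^ ε) from
      funext fun θ => by ring,
    integral_const_mul, my_cos_rpow ε hε]
  -- Step H : Gamma algebra
  have hε2 : (0:ℝ) < ε/2 := by linarith
  have hGε : 0 < Real.Gamma ε := Real.Gamma_pos_of_pos hε
  have hG2 : 0 < Real.Gamma (ε/2) := Real.Gamma_pos_of_pos hε2
  have hdup := Real.Gamma_mul_Gamma_add_half (ε/2)
  rw [show 2*(ε/2) = ε by ring] at hdup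
  have hG1 : Real.Gamma (ε+1) = ε * Real.Gamma ε := by
    rw [Real.Gamma_add_one hε.ne']
  have hGh : Real.Gamma (1+ε/2) = (ε/2) * Real.Gamma (ε/2) := by
    rw [add_comm, Real.Gamma_add_one hε2.ne']
  have hval : Real.Gamma (ε/2+1/2)
      = Real.Gamma ε * 2^(1-ε) * Real.sqrt π / Real.Gamma (ε/2) := by
    rw [eq_div_iff hG2.ne']
    linear_combination hdup
  have h2 : (2:ℝ)^(1-ε) = 2/2^ε := by
    rw [Real.rpow_sub two_pos, Real.rpow_one]
  have hsq : Real.sqrt π * Real.sqrt π = π := Real.mul_self_sqrt Real.pi_pos.le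
  rw [show (ε+1)/2 = ε/2 + 1/2 by ring, hval, hG1, hGh, h2, ← hsq]
  have h2ε : (0:ℝ) < 2^ε := Real.rpow_pos_of_pos two_pos ε
  field_simp
  have hs2 : Real.sqrt (Real.sqrt π ^ 2) = Real.sqrt π := Real.sqrt_sq (Real.sqrt_nonneg _)
  linear_combination (Real.sqrt (Real.sqrt π ^ 2) + Real.sqrt π) * hs2

end AuxLemmas

theorem dA_integral_eq (ε : ℝ) (hε : 0 < ε) :
    ∫ z, ‖1 - z‖ ^ (-2 + ε) ∂dA
      = Real.Gamma ε / Real.Gamma (1 + ε/2) ^ 2 := by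
  have hmeas : AEStronglyMeasurable (fun z : ℂ => ‖1-z‖ ^ (-2+ε))
      (volume.restrict (ball (0:ℂ) 1)) :=
    (((continuous_norm.comp (continuous_const.sub continuous_id)).measurable).pow_const
      (-2+ε)).aestronglyMeasurable
  have hnn : 0 ≤ᵐ[volume.restrict (ball (0:ℂ) 1)]
      fun z : ℂ => ‖1-z‖ ^ (-2+ε) :=
    ae_of_all _ fun z => Real.rpow_nonneg (norm_nonneg _) _
  rw [dA, integral_smul_measure, integral_eq_lintegral_of_nonneg_ae hnn hmeas,
    show (-2+ε : ℝ) = ε - 2 by ring, main_lint ε hε,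
    ENNReal.toReal_ofReal (by positivity : (0:ℝ) ≤ Real.pi * _),
    ENNReal.toReal_ofReal (by positivity : (0:ℝ) ≤ 1 / Real.pi), smul_eq_mul]
  have hπ : Real.pi ≠ 0 := Real.pi_ne_zero
  field_simp

theorem gn_norm_tendsto_one :
    (∀ n : ℕ, 0 < n →
      ∫ z, ‖1 - z‖ ^ (-2 + 1 / (n : ℝ)) ∂dA
        = Real.Gamma (1 / (n : ℝ)) / (Real.Gamma (1 + 1 / (2 * (n : ℝ)))) ^ 2) ∧
    Tendsto (fun n : ℕ =>
        bergNorm (fun z => (1 / (n : ℂ)) * (1 - z) ^ ((-2 + 1 / (n : ℝ) : ℝ) : ℂ)))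
      atTop (𝓝 1) := by
  constructor
  · intro n hn
    have hn0 : (0:ℝ) < n := by exact_mod_cast hn
    have h1n : 0 < 1/(n:ℝ) := by positivity
    rw [dA_integral_eq _ h1n, show (1/(n:ℝ))/2 = 1/(2*(n:ℝ)) by ring]
  · have heq : ∀ᶠ n : ℕ in atTop,
        bergNorm (fun z => (1 / (n : ℂ)) * (1 - z) ^ ((-2 + 1 / (n : ℝ) : ℝ) : ℂ))
          = Real.Gamma (1 + 1/(n:ℝ)) / Real.Gamma (1 + (1/(n:ℝ))/2) ^ 2 := by
      filter_upwards [eventually_ge_atTop 1] with n hn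
      have hn0 : (0:ℝ) < n := by exact_mod_cast Nat.lt_of_lt_of_le Nat.zero_lt_one hn
      have h1n : 0 < 1/(n:ℝ) := by positivity
      have habs : ∀ z : ℂ, ‖(1 / (n : ℂ)) * (1 - z) ^ ((-2 + 1 / (n : ℝ) : ℝ) : ℂ)‖
          = (1/(n:ℝ)) * ‖1-z‖ ^ (-2 + 1/(n:ℝ)) := by
        intro z
        rw [norm_mul, Complex.norm_cpow_real, norm_div, norm_one, Complex.norm_natCast]
      rw [bergNorm, integral_congr_ae (ae_of_all _ fun z => habs z), integral_const_mul,
        dA_integral_eq _ h1n, show (1:ℝ) + 1/(n:ℝ) = 1/(n:ℝ) + 1 by ring,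
        Real.Gamma_add_one h1n.ne']
      ring
    have hG : ContinuousAt Real.Gamma 1 :=
      (Real.differentiableAt_Gamma (fun m => by
        have h0 : (0:ℝ) ≤ m := Nat.cast_nonneg m
        intro h
        linarith)).continuousAt
    have hcont : ContinuousAt (fun x : ℝ => Real.Gamma (1+x) / Real.Gamma (1+x/2) ^ 2) 0 := by
      have hG0 : ContinuousAt Real.Gamma ((1:ℝ)+0) := by rw [add_zero]; exact hG
      have hG0' : ContinuousAt Real.Gamma ((1:ℝ)+0/2) := by rw [zero_div, add_zero]; exact hG
      have h1 : ContinuousAt (fun x : ℝ => Real.Gamma (1+x)) 0 := by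
        have hc : ContinuousAt (fun x : ℝ => 1 + x) 0 := by fun_prop
        exact ContinuousAt.comp (g := Real.Gamma) (f := fun x : ℝ => 1 + x) hG0 hc
      have h2 : ContinuousAt (fun x : ℝ => Real.Gamma (1+x/2) ^ 2) 0 := by
        have hc : ContinuousAt (fun x : ℝ => 1 + x/2) 0 := by fun_prop
        exact (ContinuousAt.comp (g := Real.Gamma) (f := fun x : ℝ => 1 + x/2) hG0' hc).pow 2
      exact h1.div h2 (by norm_num [Real.Gamma_one])
    have htend : Tendsto (fun n : ℕ => Real.Gamma (1 + 1/(n:ℝ)) / Real.Gamma (1 + (1/(n:ℝ))/2) ^ 2)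
        atTop (𝓝 1) := by
      have := hcont.tendsto.comp tendsto_one_div_atTop_nhds_zero_nat
      simpa [Function.comp_def, Real.Gamma_one] using this
    exact htend.congr' (heq.mono fun n h => h.symm)
end
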